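/- arXiv:2203.15500 — 5 statements merged into one kernel-verified Lean document; each statement's English description precedes it below -/
import Mathlib

section
/- (Proposition 1, full-matrix part.) For every t ≥ 1, the matrix estimator A^u(t) := (1/μ²)(y_{t+1} y_tᵀ − y_{t+2} y_{t−1}ᵀ) is an unbiased estimator of A, i.e. E[A^u(t)] = A (entrywise). -/
open MeasureTheory ProbabilityTheory Filter Real
open scoped ENNReal NNReal

namespace EUFHelper

lemma tend_top (s : ℝ) :
    Tendsto (fun x : ℝ => x ^ s * rexp (-2⁻¹ * x ^ 2)) atTop (nhds 0) := by
  have hexp : Tendsto (fun x : ℝ => rexp (-(1/2) * x)) atTop (nhds 0) := by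
    have h : Tendsto (fun x : ℝ => rexp (-((1/2) * x))) atTop (nhds 0) :=
      tendsto_exp_neg_atTop_nhds_zero.comp (tendsto_id.const_mul_atTop (by norm_num))
    simpa [neg_mul] using h
  exact (rpow_mul_exp_neg_mul_sq_isLittleO_exp_neg (by norm_num) s).isBigO.trans_tendsto hexp

lemma tend_top_id :
    Tendsto (fun x : ℝ => x * rexp (-2⁻¹ * x ^ 2)) atTop (nhds 0) := by
  simpa [Real.rpow_one] using tend_top 1

lemma tend_top_one :
    Tendsto (fun x : ℝ => rexp (-2⁻¹ * x ^ 2)) atTop (nhds 0) := by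
  simpa [Real.rpow_zero] using tend_top 0

lemma tend_bot_of_top {g : ℝ → ℝ} (h : Tendsto g atTop (nhds 0)) :
    Tendsto (fun x : ℝ => g (-x)) atBot (nhds 0) :=
  h.comp tendsto_neg_atBot_atTop

lemma integrable_sq_exp :
    Integrable (fun x : ℝ => x ^ 2 * rexp (-2⁻¹ * x ^ 2)) := by
  have h := integrable_rpow_mul_exp_neg_mul_sq (b := 2⁻¹) (by norm_num) (s := 2) (by norm_num)
  refine h.congr ?_
  -- h : Integrable fun x => x ^ (2:ℝ) * rexp (-2⁻¹ * x ^ 2)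
  filter_upwards with x
  rw [show ((2:ℝ)) = ((2:ℕ):ℝ) by norm_num, Real.rpow_natCast]

lemma integrable_exp : Integrable (fun x : ℝ => rexp (-2⁻¹ * x ^ 2)) :=
  integrable_exp_neg_mul_sq (by norm_num)

lemma integrable_id_exp : Integrable (fun x : ℝ => x * rexp (-2⁻¹ * x ^ 2)) :=
  integrable_mul_exp_neg_mul_sq (by norm_num)

lemma integral_sq_exp : ∫ x : ℝ, x ^ 2 * rexp (-2⁻¹ * x ^ 2) = Real.sqrt (2 * π) := by
  set f : ℝ → ℝ := fun x => -x * rexp (-2⁻¹ * x ^ 2) with hf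
  have hderiv : ∀ x : ℝ, HasDerivAt f
      (x ^ 2 * rexp (-2⁻¹ * x ^ 2) - rexp (-2⁻¹ * x ^ 2)) x := by
    intro x
    have h1 : HasDerivAt (fun x : ℝ => -2⁻¹ * x ^ 2) (-2⁻¹ * (2 * x)) x := by
      simpa using (hasDerivAt_pow 2 x).const_mul (-2⁻¹ : ℝ)
    have h3 := ((hasDerivAt_id x).neg).mul h1.exp
    refine h3.congr_deriv ?_
    simp only [Pi.neg_apply, id]
    ring
  have hint : Integrable (fun x : ℝ => x ^ 2 * rexp (-2⁻¹ * x ^ 2) - rexp (-2⁻¹ * x ^ 2)) :=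
    integrable_sq_exp.sub integrable_exp
  have htop : Tendsto f atTop (nhds 0) := by
    simpa [hf, neg_mul] using tend_top_id.neg
  have hbot : Tendsto f atBot (nhds 0) := by
    have := tend_bot_of_top tend_top_id
    refine this.congr (fun x => ?_)
    simp [hf]
  have hIoi := integral_Ioi_of_hasDerivAt_of_tendsto' (a := 0)
    (fun x _ => hderiv x) hint.integrableOn htop
  have hIic := integral_Iic_of_hasDerivAt_of_tendsto' (a := 0)
    (fun x _ => hderiv x) hint.integrableOn hbot
  have hsplit : (∫ x : ℝ, (x ^ 2 * rexp (-2⁻¹ * x ^ 2) - rexp (-2⁻¹ * x ^ 2)))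
      = (∫ x in Set.Iic (0:ℝ), (x ^ 2 * rexp (-2⁻¹ * x ^ 2) - rexp (-2⁻¹ * x ^ 2)))
        + ∫ x in Set.Ioi (0:ℝ), (x ^ 2 * rexp (-2⁻¹ * x ^ 2) - rexp (-2⁻¹ * x ^ 2)) := by
    rw [← integral_add_compl measurableSet_Iic hint, Set.compl_Iic]
  have hzero : (∫ x : ℝ, (x ^ 2 * rexp (-2⁻¹ * x ^ 2) - rexp (-2⁻¹ * x ^ 2))) = 0 := by
    rw [hsplit, hIoi, hIic]; simp [hf]
  have hsub := integral_sub integrable_sq_exp integrable_exp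
  rw [hsub] at hzero
  have hg : (∫ x : ℝ, rexp (-2⁻¹ * x ^ 2)) = Real.sqrt (2 * π) := by
    have := integral_gaussian (2⁻¹ : ℝ)
    simpa [div_eq_mul_inv, mul_comm] using this
  linarith [hzero, hg]

lemma integral_id_exp : ∫ x : ℝ, x * rexp (-2⁻¹ * x ^ 2) = 0 := by
  set f : ℝ → ℝ := fun x => -rexp (-2⁻¹ * x ^ 2) with hf
  have hderiv : ∀ x : ℝ, HasDerivAt f (x * rexp (-2⁻¹ * x ^ 2)) x := by
    intro x
    have h1 : HasDerivAt (fun x : ℝ => -2⁻¹ * x ^ 2) (-2⁻¹ * (2 * x)) x := by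
      simpa using (hasDerivAt_pow 2 x).const_mul (-2⁻¹ : ℝ)
    have h3 := h1.exp.neg
    refine h3.congr_deriv ?_
    ring
  have htop : Tendsto f atTop (nhds 0) := by
    simpa [hf] using tend_top_one.neg
  have hbot : Tendsto f atBot (nhds 0) := by
    have h2 : Tendsto (fun x : ℝ => -rexp (-2⁻¹ * (-x) ^ 2)) atBot (nhds 0) := by
      simpa using (tend_bot_of_top tend_top_one).neg
    refine h2.congr (fun x => ?_)
    simp [hf]
  have hIoi := integral_Ioi_of_hasDerivAt_of_tendsto' (a := 0)
    (fun x _ => hderiv x) integrable_id_exp.integrableOn htop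
  have hIic := integral_Iic_of_hasDerivAt_of_tendsto' (a := 0)
    (fun x _ => hderiv x) integrable_id_exp.integrableOn hbot
  have hsplit : (∫ x : ℝ, x * rexp (-2⁻¹ * x ^ 2))
      = (∫ x in Set.Iic (0:ℝ), x * rexp (-2⁻¹ * x ^ 2))
        + ∫ x in Set.Ioi (0:ℝ), x * rexp (-2⁻¹ * x ^ 2) := by
    rw [← integral_add_compl measurableSet_Iic integrable_id_exp, Set.compl_Iic]
  rw [hsplit, hIoi, hIic]
  simp [hf]


lemma pdf_eq : gaussianPDFReal 0 1 = fun x => (Real.sqrt (2*π))⁻¹ * rexp (-2⁻¹ * x ^ 2) := by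
  funext x
  simp only [gaussianPDFReal, NNReal.coe_one, mul_one, sub_zero]
  ring_nf

lemma integral_gaussianReal (g : ℝ → ℝ) :
    ∫ x, g x ∂(gaussianReal 0 1) = ∫ x, gaussianPDFReal 0 1 x * g x := by
  rw [gaussianReal_of_var_ne_zero 0 one_ne_zero]
  have hmeas : Measurable fun x => Real.toNNReal (gaussianPDFReal 0 1 x) :=
    (measurable_gaussianPDFReal 0 1).real_toNNReal
  have h := integral_withDensity_eq_integral_smul (μ := (volume : Measure ℝ)) hmeas g
  rw [show (volume : Measure ℝ).withDensity (gaussianPDF 0 1)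
      = (volume : Measure ℝ).withDensity (fun x => ((Real.toNNReal (gaussianPDFReal 0 1 x) : ℝ≥0) : ℝ≥0∞))
    from rfl, h]
  congr 1
  funext x
  rw [NNReal.smul_def, smul_eq_mul, Real.coe_toNNReal _ (gaussianPDFReal_nonneg 0 1 x)]

lemma integrable_gaussianReal_iff (g : ℝ → ℝ) :
    Integrable g (gaussianReal 0 1) ↔
      Integrable (fun x => g x * gaussianPDFReal 0 1 x) volume := by
  rw [gaussianReal_of_var_ne_zero 0 one_ne_zero]
  rw [integrable_withDensity_iff (measurable_gaussianPDF 0 1)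
    (Filter.Eventually.of_forall fun x => ENNReal.ofReal_lt_top)]
  refine integrable_congr (Filter.Eventually.of_forall fun x => ?_)
  simp only [gaussianPDF_def]
  rw [ENNReal.toReal_ofReal (gaussianPDFReal_nonneg 0 1 x)]

lemma gauss_sq_integrable : Integrable (fun x : ℝ => x ^ 2) (gaussianReal 0 1) := by
  rw [integrable_gaussianReal_iff, pdf_eq]
  have : Integrable (fun x : ℝ => (Real.sqrt (2*π))⁻¹ * (x ^ 2 * rexp (-2⁻¹ * x ^ 2))) :=
    integrable_sq_exp.const_mul _
  refine this.congr (Filter.Eventually.of_forall fun x => ?_)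
  ring

lemma gauss_memℒp2 : MemLp (fun x : ℝ => x) 2 (gaussianReal 0 1) :=
  (memLp_two_iff_integrable_sq aestronglyMeasurable_id).mpr gauss_sq_integrable

lemma gauss_mean : ∫ x : ℝ, x ∂(gaussianReal 0 1) = 0 := by
  rw [integral_gaussianReal, pdf_eq]
  have h1 : (∫ x : ℝ, (Real.sqrt (2*π))⁻¹ * rexp (-2⁻¹ * x ^ 2) * x)
      = (Real.sqrt (2*π))⁻¹ * ∫ x : ℝ, x * rexp (-2⁻¹ * x ^ 2) := by
    rw [← integral_const_mul]
    congr 1; funext x; ring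
  rw [h1, integral_id_exp, mul_zero]

lemma gauss_sq_moment : ∫ x : ℝ, x * x ∂(gaussianReal 0 1) = 1 := by
  rw [integral_gaussianReal, pdf_eq]
  have h1 : (∫ x : ℝ, (Real.sqrt (2*π))⁻¹ * rexp (-2⁻¹ * x ^ 2) * (x * x))
      = (Real.sqrt (2*π))⁻¹ * ∫ x : ℝ, x ^ 2 * rexp (-2⁻¹ * x ^ 2) := by
    rw [← integral_const_mul]
    congr 1; funext x; ring
  rw [h1, integral_sq_exp]
  rw [inv_mul_cancel₀]
  positivity

end EUFHelper

open MeasureTheory ProbabilityTheory Matrix Filter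

/-- Proposition 1 (full-matrix part): for every `t ≥ 1`, the matrix estimator
`Aᵘ(t) = (1/μ²)(y_{t+1} yₜᵀ − y_{t+2} y_{t−1}ᵀ)` is an unbiased estimator of `A`,
i.e. `E[Aᵘ(t)] = A` entrywise. -/
theorem estimator_unbiased_full
    {Ω : Type*} [MeasurableSpace Ω] (P : Measure Ω) [IsProbabilityMeasure P]
    (N : ℕ) (hN : 1 ≤ N) (μ : ℝ) (hμ : μ ∈ Set.Ioo (0 : ℝ) 1)
    (A : Matrix (Fin N) (Fin N) ℝ) (hA : A.IsSymm)
    (x : ℕ → Ω → Fin N → ℝ)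
    (hxmeas : ∀ t k, Measurable (fun ω => x t ω k))
    (hxindep : iIndepFun (m := fun _ : ℕ × Fin N => (inferInstance : MeasurableSpace ℝ))
      (fun p ω => x p.1 ω p.2) P)
    (hxgauss : ∀ t k, P.map (fun ω => x t ω k) = gaussianReal 0 1)
    (y : ℕ → Ω → Fin N → ℝ)
    (hy0 : ∀ ω, y 0 ω = μ • x 0 ω)
    (hyrec : ∀ t ω, y (t + 1) ω = A.mulVec (y t ω) + μ • x (t + 1) ω)
    (t : ℕ) (ht : 1 ≤ t) :
    (Matrix.of fun i j =>
        ∫ ω, (μ ^ 2)⁻¹ * (y (t + 1) ω i * y t ω j - y (t + 2) ω i * y (t - 1) ω j) ∂P)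
      = A := by
  obtain ⟨m, rfl⟩ : ∃ m, t = m + 1 := ⟨t - 1, (Nat.succ_pred_eq_of_pos ht).symm⟩
  set X : ℕ × Fin N → Ω → ℝ := fun p ω => x p.1 ω p.2 with hXdef
  have hXmeas : ∀ p, Measurable (X p) := fun p => hxmeas p.1 p.2
  have hmap : ∀ p, P.map (X p) = gaussianReal 0 1 := fun p => hxgauss p.1 p.2
  have hX2 : ∀ p, MemLp (X p) 2 P := by
    intro p
    have h := EUFHelper.gauss_memℒp2
    rw [← hmap p] at h
    exact (memLp_map_measure_iff aestronglyMeasurable_id (hXmeas p).aemeasurable).mp h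
  have hXint : ∀ p, Integrable (X p) P := fun p => (hX2 p).integrable one_le_two
  have hXmean : ∀ p, ∫ ω, X p ω ∂P = 0 := by
    intro p
    have h : ∫ ω, X p ω ∂P = ∫ v, v ∂(gaussianReal 0 1) := by
      rw [← hmap p]
      exact (integral_map (hXmeas p).aemeasurable
        measurable_id.aestronglyMeasurable).symm
    rw [h]
    exact EUFHelper.gauss_mean
  have hXsq : ∀ p, ∫ ω, X p ω * X p ω ∂P = 1 := by
    intro p
    have h : ∫ ω, X p ω * X p ω ∂P = ∫ v, v * v ∂(gaussianReal 0 1) := by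
      rw [← hmap p]
      exact (integral_map (hXmeas p).aemeasurable
        (measurable_id.mul measurable_id).aestronglyMeasurable).symm
    rw [h]
    exact EUFHelper.gauss_sq_moment
  have hmul_int : ∀ p q, Integrable (fun ω => X p ω * X q ω) P := by
    intro p q
    have h := (hX2 q).smul (hX2 p) (r := 1)
    rw [memLp_one_iff_integrable] at h
    exact h
  have hkey : ∀ p q, ∫ ω, X p ω * X q ω ∂P = if p = q then 1 else 0 := by
    intro p q
    by_cases h : p = q
    · subst h; rw [if_pos rfl]; exact hXsq p
    · rw [if_neg h]
      have hind : IndepFun (X p) (X q) P := hxindep.indepFun h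
      have h2 := hind.integral_mul_eq_mul_integral (hXint p).1 (hXint q).1
      have h3 : ∫ ω, X p ω * X q ω ∂P = (∫ ω, X p ω ∂P) * ∫ ω, X q ω ∂P := h2
      rw [h3, hXmean p, hXmean q, mul_zero]
  -- explicit solution of the recursion
  have hyrep : ∀ n ω, y n ω = ∑ s ∈ Finset.range (n+1), μ • (A ^ (n - s)).mulVec (x s ω) := by
    intro n
    induction n with
    | zero => intro ω; simpa using hy0 ω
    | succ n ih =>
      intro ω
      rw [hyrec n ω, ih ω]
      conv_rhs => rw [Finset.sum_range_succ]
      congr 1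
      · have hlin : A.mulVec (∑ s ∈ Finset.range (n+1), μ • (A ^ (n - s)).mulVec (x s ω))
            = ∑ s ∈ Finset.range (n+1), A.mulVec (μ • (A ^ (n - s)).mulVec (x s ω)) := by
          simp only [← Matrix.mulVecLin_apply]
          exact map_sum A.mulVecLin _ _
        rw [hlin]
        refine Finset.sum_congr rfl fun s hs => ?_
        have hs' : s ≤ n := Nat.lt_succ_iff.mp (Finset.mem_range.mp hs)
        rw [Matrix.mulVec_smul, Matrix.mulVec_mulVec, ← pow_succ',
          show n - s + 1 = n + 1 - s from by omega]
      · simp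
  -- entrywise representation over a flattened index set
  set S : ℕ → Finset (ℕ × Fin N) := fun a => Finset.range (a+1) ×ˢ Finset.univ with hSdef
  set c : ℕ → Fin N → ℕ × Fin N → ℝ := fun a i p => μ * (A ^ (a - p.1)) i p.2 with hcdef
  have hentry : ∀ a ω i, y a ω i = ∑ p ∈ S a, c a i p * X p ω := by
    intro a ω i
    rw [hyrep a ω, Finset.sum_apply, hSdef]
    rw [Finset.sum_product]
    refine Finset.sum_congr rfl fun s hs => ?_
    simp only [Pi.smul_apply, smul_eq_mul, Matrix.mulVec, dotProduct, Finset.mul_sum,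
      hcdef, hXdef]
    refine Finset.sum_congr rfl fun k _ => ?_
    ring
  have hprod : ∀ a b i j ω, y a ω i * y b ω j
      = ∑ p ∈ S a, ∑ q ∈ S b, (c a i p * c b j q) * (X p ω * X q ω) := by
    intro a b i j ω
    rw [hentry a ω i, hentry b ω j, Finset.sum_mul_sum]
    exact Finset.sum_congr rfl fun p _ => Finset.sum_congr rfl fun q _ => by ring
  have hyy_int : ∀ a b i j, Integrable (fun ω => y a ω i * y b ω j) P := by
    intro a b i j
    have : (fun ω => y a ω i * y b ω j)
        = fun ω => ∑ p ∈ S a, ∑ q ∈ S b, (c a i p * c b j q) * (X p ω * X q ω) := by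
      funext ω; exact hprod a b i j ω
    rw [this]
    exact integrable_finset_sum _ fun p _ =>
      integrable_finset_sum _ fun q _ => (hmul_int p q).const_mul _
  have hpowsym : ∀ n : ℕ, (A ^ n)ᵀ = A ^ n := by
    intro n
    rw [Matrix.transpose_pow, hA]
  have hyy : ∀ a b i j, ∫ ω, y a ω i * y b ω j ∂P
      = μ^2 * ∑ s ∈ Finset.range (min a b + 1), (A ^ (a + b - 2*s)) i j := by
    intro a b i j
    simp_rw [hprod a b i j]
    rw [integral_finset_sum _ (fun p _ =>
      integrable_finset_sum _ fun q _ => (hmul_int p q).const_mul _)]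
    have hstep : ∀ p ∈ S a, (∫ ω, ∑ q ∈ S b, (c a i p * c b j q) * (X p ω * X q ω) ∂P)
        = if p ∈ S b then c a i p * c b j p else 0 := by
      intro p _
      rw [integral_finset_sum _ fun q _ => (hmul_int p q).const_mul _]
      have : ∀ q, (∫ ω, (c a i p * c b j q) * (X p ω * X q ω) ∂P)
          = if p = q then c a i p * c b j q else 0 := by
        intro q
        rw [integral_const_mul, hkey p q]
        split_ifs <;> ring
      simp_rw [this]
      exact Finset.sum_ite_eq (S b) p fun q => c a i p * c b j q
    rw [Finset.sum_congr rfl hstep, Finset.sum_ite_mem]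
    have hSS : S a ∩ S b = S (min a b) := by
      ext p
      simp only [hSdef, Finset.mem_inter, Finset.mem_product, Finset.mem_range,
        Finset.mem_univ, and_true, Nat.lt_succ_iff, le_min_iff]
    rw [hSS, hSdef]
    rw [Finset.sum_product]
    rw [Finset.mul_sum]
    refine Finset.sum_congr rfl fun s hs => ?_
    have hs' : s ≤ min a b := Nat.lt_succ_iff.mp (Finset.mem_range.mp hs)
    have hinner : ∑ k : Fin N, c a i (s, k) * c b j (s, k)
        = μ^2 * ∑ k : Fin N, (A ^ (a - s)) i k * (A ^ (b - s)) j k := by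
      rw [Finset.mul_sum]
      refine Finset.sum_congr rfl fun k _ => ?_
      simp only [hcdef]
      ring
    rw [hinner]
    congr 1
    have h1 : ∑ k : Fin N, (A ^ (a - s)) i k * (A ^ (b - s)) j k
        = (A ^ (a - s) * (A ^ (b - s))ᵀ) i j := by
      rw [Matrix.mul_apply]
      exact Finset.sum_congr rfl fun k _ => by rw [Matrix.transpose_apply]
    rw [h1, hpowsym, ← pow_add,
      show a - s + (b - s) = a + b - 2*s from by omega]
  -- final assembly
  have hμ2 : (μ : ℝ)^2 ≠ 0 := pow_ne_zero 2 (ne_of_gt hμ.1)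
  ext i j
  simp only [Matrix.of_apply]
  rw [show (fun ω => (μ ^ 2)⁻¹ * (y (m+1+1) ω i * y (m+1) ω j
        - y (m+1+2) ω i * y (m+1-1) ω j))
      = fun ω => (μ ^ 2)⁻¹ * ((fun ω => y (m+2) ω i * y (m+1) ω j) ω
        - (fun ω => y (m+3) ω i * y m ω j) ω) from rfl]
  rw [integral_const_mul, integral_sub (hyy_int (m+2) (m+1) i j) (hyy_int (m+3) m i j)]
  rw [hyy (m+2) (m+1) i j, hyy (m+3) m i j]
  have hmin1 : min (m+2) (m+1) = m + 1 := min_eq_right (by omega)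
  have hmin2 : min (m+3) m = m := min_eq_right (by omega)
  rw [hmin1, hmin2]
  have hsum1 : ∑ s ∈ Finset.range (m+1+1), (A ^ ((m+2) + (m+1) - 2*s)) i j
      = (∑ s ∈ Finset.range (m+1), (A ^ ((m+2) + (m+1) - 2*s)) i j) + A i j := by
    rw [Finset.sum_range_succ]
    congr 2
    rw [show (m+2) + (m+1) - 2*(m+1) = 1 by omega, pow_one]
  have hsum2 : ∑ s ∈ Finset.range (m+1), (A ^ ((m+3) + m - 2*s)) i j
      = ∑ s ∈ Finset.range (m+1), (A ^ ((m+2) + (m+1) - 2*s)) i j := by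
    refine Finset.sum_congr rfl fun s hs => ?_
    rw [show (m+3) + m - 2*s = (m+2) + (m+1) - 2*s by omega]
  rw [hsum1, hsum2]
  field_simp
  ring_nf
  rw [mul_comm, ← mul_assoc, inv_mul_cancel₀ (ne_of_gt hμ.1), one_mul]
end

section
/- (Proposition 1, submatrix part.) For every subset S ⊆ {1,…,N} and every t ≥ 1, the submatrix [A^u(t)]_S equals (1/μ²)([y_{t+1}]_S([y_t]_S)ᵀ − [y_{t+2}]_S([y_{t−1}]_S)ᵀ), i.e. it is computable from the observed coordinates alone, and it is an unbiased estimator of A_S: E[[A^u(t)]_S] = A_S. -/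
open MeasureTheory ProbabilityTheory Matrix Filter

namespace EstimatorAux

open Real

set_option linter.unusedSectionVars false


lemma gauss_pdf_eq (x : ℝ) :
    gaussianPDFReal 0 1 x = (Real.sqrt (2 * Real.pi))⁻¹ * Real.exp (-(1/2) * x ^ 2) := by
  simp only [gaussianPDFReal, NNReal.coe_one, mul_one, sub_zero]
  ring_nf

lemma J0 : Integrable (fun x : ℝ => Real.exp (-(1/2) * x ^ 2)) := by
  exact integrable_exp_neg_mul_sq (by norm_num)

lemma J1 : Integrable (fun x : ℝ => x * Real.exp (-(1/2) * x ^ 2)) := by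
  exact integrable_mul_exp_neg_mul_sq (by norm_num)

lemma J2 : Integrable (fun x : ℝ => x ^ 2 * Real.exp (-(1/2) * x ^ 2)) := by
  have h := integrable_rpow_mul_exp_neg_mul_sq (b := 1/2) (by norm_num) (s := 2) (by norm_num)
  have e : (fun x : ℝ => x ^ (2:ℝ) * Real.exp (-(1/2 : ℝ) * x ^ 2))
      = fun x : ℝ => x ^ 2 * Real.exp (-(1/2) * x ^ 2) := by
    funext x
    rw [show ((2:ℝ)) = ((2:ℕ):ℝ) by norm_num, Real.rpow_natCast]
  rw [e] at h
  exact h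

lemma hD1 (x : ℝ) : HasDerivAt (fun y : ℝ => -Real.exp (-(1/2) * y ^ 2))
    (x * Real.exp (-(1/2) * x ^ 2)) x := by
  have h : HasDerivAt (fun y : ℝ => -(1/2 : ℝ) * y ^ 2) (-(1/2 : ℝ) * (2 * x ^ 1)) x :=
    (hasDerivAt_pow 2 x).const_mul _
  have := h.exp.neg
  convert this using 1
  · rfl
  · rfl
  · rfl
  · ring

lemma hD2 (x : ℝ) : HasDerivAt (fun y : ℝ => y * Real.exp (-(1/2) * y ^ 2))
    (Real.exp (-(1/2) * x ^ 2) - x ^ 2 * Real.exp (-(1/2) * x ^ 2)) x := by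
  have h : HasDerivAt (fun y : ℝ => -(1/2 : ℝ) * y ^ 2) (-(1/2 : ℝ) * (2 * x ^ 1)) x :=
    (hasDerivAt_pow 2 x).const_mul _
  have := (hasDerivAt_id x).mul h.exp
  simp only [id_eq] at this
  convert this using 1
  · rfl
  · rfl
  · rfl
  · ring

lemma I1 : ∫ x : ℝ, x * Real.exp (-(1/2) * x ^ 2) = 0 :=
  integral_eq_zero_of_hasDerivAt_of_integrable hD1 J1 J0.neg

lemma I0 : ∫ x : ℝ, Real.exp (-(1/2) * x ^ 2) = Real.sqrt (2 * Real.pi) := by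
  have h := integral_gaussian (1/2)
  have e : (fun x : ℝ => Real.exp (-(1/2 : ℝ) * x ^ 2))
      = fun x : ℝ => Real.exp (-(1/2) * x ^ 2) := rfl
  rw [show Real.sqrt (Real.pi / (1/2)) = Real.sqrt (2 * Real.pi) by norm_num [mul_comm]] at h
  exact h

lemma I2 : ∫ x : ℝ, x ^ 2 * Real.exp (-(1/2) * x ^ 2) = Real.sqrt (2 * Real.pi) := by
  have h0 := integral_eq_zero_of_hasDerivAt_of_integrable hD2 (J0.sub J2) J1
  rw [integral_sub J0 J2] at h0
  have := sub_eq_zero.mp h0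
  rw [← this, I0]


noncomputable def pdfnn : ℝ → NNReal := fun x => (gaussianPDFReal 0 1 x).toNNReal

lemma pdfnn_meas : Measurable pdfnn := (measurable_gaussianPDFReal 0 1).real_toNNReal

lemma gaussianReal_eq : gaussianReal 0 1 = volume.withDensity (fun x => (pdfnn x : ENNReal)) := by
  rw [gaussianReal_of_var_ne_zero 0 one_ne_zero]
  rfl

lemma gauss_integral (g : ℝ → ℝ) :
    ∫ x, g x ∂(gaussianReal 0 1) = ∫ x, gaussianPDFReal 0 1 x * g x := by
  rw [gaussianReal_eq, integral_withDensity_eq_integral_smul pdfnn_meas g]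
  congr 1
  funext x
  simp [pdfnn, NNReal.smul_def, Real.coe_toNNReal _ (gaussianPDFReal_nonneg _ _ _)]

lemma gauss_integrable (g : ℝ → ℝ) (hg : Integrable (fun x => gaussianPDFReal 0 1 x * g x)) :
    Integrable g (gaussianReal 0 1) := by
  rw [gaussianReal_eq, integrable_withDensity_iff_integrable_smul pdfnn_meas]
  convert hg using 1
  rfl
  funext x
  simp [pdfnn, NNReal.smul_def, Real.coe_toNNReal _ (gaussianPDFReal_nonneg _ _ _)]

lemma sqrt2pi_pos : 0 < Real.sqrt (2 * Real.pi) :=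
  Real.sqrt_pos.mpr (by positivity)

lemma gauss_int1 : Integrable (fun x : ℝ => x) (gaussianReal 0 1) := by
  refine gauss_integrable _ ?_
  have e : (fun x : ℝ => gaussianPDFReal 0 1 x * x)
      = fun x => (Real.sqrt (2 * Real.pi))⁻¹ * (x * Real.exp (-(1/2) * x ^ 2)) := by
    funext x; rw [gauss_pdf_eq]; ring
  rw [e]
  exact J1.const_mul _

lemma gauss_m1 : ∫ x, x ∂(gaussianReal 0 1) = 0 := by
  rw [gauss_integral]
  have e : (fun x : ℝ => gaussianPDFReal 0 1 x * x)
      = fun x => (Real.sqrt (2 * Real.pi))⁻¹ * (x * Real.exp (-(1/2) * x ^ 2)) := by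
    funext x; rw [gauss_pdf_eq]; ring
  rw [e, integral_const_mul, I1, mul_zero]

lemma gauss_int2 : Integrable (fun x : ℝ => x * x) (gaussianReal 0 1) := by
  refine gauss_integrable _ ?_
  have e : (fun x : ℝ => gaussianPDFReal 0 1 x * (x * x))
      = fun x => (Real.sqrt (2 * Real.pi))⁻¹ * (x ^ 2 * Real.exp (-(1/2) * x ^ 2)) := by
    funext x; rw [gauss_pdf_eq]; ring
  rw [e]
  exact J2.const_mul _

lemma gauss_m2 : ∫ x, x * x ∂(gaussianReal 0 1) = 1 := by
  rw [gauss_integral]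
  have e : (fun x : ℝ => gaussianPDFReal 0 1 x * (x * x))
      = fun x => (Real.sqrt (2 * Real.pi))⁻¹ * (x ^ 2 * Real.exp (-(1/2) * x ^ 2)) := by
    funext x; rw [gauss_pdf_eq]; ring
  rw [e, integral_const_mul, I2, inv_mul_cancel₀ (ne_of_gt sqrt2pi_pos)]


section Xlemmas

variable {Ω : Type*} [MeasurableSpace Ω] (P : Measure Ω) [IsProbabilityMeasure P]
    {N : ℕ} (x : ℕ → Ω → Fin N → ℝ)
    (hxmeas : ∀ t k, Measurable (fun ω => x t ω k))
    (hxgauss : ∀ t k, P.map (fun ω => x t ω k) = gaussianReal 0 1)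

include hxmeas hxgauss

lemma int_x (s : ℕ) (k : Fin N) : Integrable (fun ω => x s ω k) P := by
  have h := (integrable_map_measure (μ := P) (f := fun ω => x s ω k) (g := fun r : ℝ => r)
    measurable_id.aestronglyMeasurable (hxmeas s k).aemeasurable).mp
  rw [hxgauss s k] at h
  exact h gauss_int1

lemma integral_x (s : ℕ) (k : Fin N) : ∫ ω, x s ω k ∂P = 0 := by
  have h := integral_map (μ := P) (φ := fun ω => x s ω k) (f := fun r : ℝ => r)
    (hxmeas s k).aemeasurable measurable_id.aestronglyMeasurable
  rw [hxgauss s k, gauss_m1] at h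
  exact h.symm

lemma int_xsq (s : ℕ) (k : Fin N) : Integrable (fun ω => x s ω k * x s ω k) P := by
  have h := (integrable_map_measure (μ := P) (f := fun ω => x s ω k) (g := fun r : ℝ => r * r)
    (measurable_id.mul measurable_id).aestronglyMeasurable (hxmeas s k).aemeasurable).mp
  rw [hxgauss s k] at h
  exact h gauss_int2

lemma integral_xsq (s : ℕ) (k : Fin N) : ∫ ω, x s ω k * x s ω k ∂P = 1 := by
  have h := integral_map (μ := P) (φ := fun ω => x s ω k) (f := fun r : ℝ => r * r)
    (hxmeas s k).aemeasurable (measurable_id.mul measurable_id).aestronglyMeasurable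
  rw [hxgauss s k, gauss_m2] at h
  exact h.symm

variable (hxindep : iIndepFun
      (fun (p : ℕ × Fin N) ω => x p.1 ω p.2) P)

include hxindep

lemma int_xx (p q : ℕ × Fin N) :
    Integrable (fun ω => x p.1 ω p.2 * x q.1 ω q.2) P := by
  rcases eq_or_ne p q with h | h
  · subst h; exact int_xsq P x hxmeas hxgauss p.1 p.2
  · exact (hxindep.indepFun h).integrable_mul
      (int_x P x hxmeas hxgauss p.1 p.2) (int_x P x hxmeas hxgauss q.1 q.2)

lemma integral_xx (p q : ℕ × Fin N) :
    ∫ ω, x p.1 ω p.2 * x q.1 ω q.2 ∂P = if p = q then 1 else 0 := by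
  rcases eq_or_ne p q with h | h
  · subst h; rw [if_pos rfl]; exact integral_xsq P x hxmeas hxgauss p.1 p.2
  · rw [if_neg h]
    have := (hxindep.indepFun h).integral_fun_mul_eq_mul_integral
      (int_x P x hxmeas hxgauss p.1 p.2).aestronglyMeasurable
      (int_x P x hxmeas hxgauss q.1 q.2).aestronglyMeasurable
    calc ∫ ω, x p.1 ω p.2 * x q.1 ω q.2 ∂P
        = (∫ ω, x p.1 ω p.2 ∂P) * ∫ ω, x q.1 ω q.2 ∂P := this
      _ = 0 := by rw [integral_x P x hxmeas hxgauss, zero_mul]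


end Xlemmas

lemma y_expand {Ω : Type*} [MeasurableSpace Ω]
    {N : ℕ} {μ : ℝ} {A : Matrix (Fin N) (Fin N) ℝ}
    {x : ℕ → Ω → Fin N → ℝ} {y : ℕ → Ω → Fin N → ℝ}
    (hy0 : ∀ ω, y 0 ω = μ • x 0 ω)
    (hyrec : ∀ t ω, y (t + 1) ω = A.mulVec (y t ω) + μ • x (t + 1) ω)
    (n : ℕ) (ω : Ω) :
    y n ω = μ • ∑ s ∈ Finset.range (n+1), (A ^ (n - s)).mulVec (x s ω) := by
  induction n with
  | zero => simp [hy0 ω]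
  | succ n ih =>
    rw [hyrec n ω, ih, Matrix.mulVec_smul]
    conv_rhs => rw [Finset.sum_range_succ]
    rw [Nat.sub_self, pow_zero, Matrix.one_mulVec, smul_add]
    congr 2
    rw [← Matrix.mulVecLin_apply, map_sum]
    refine Finset.sum_congr rfl fun s hs => ?_
    have h3 : s < n + 1 := Finset.mem_range.mp hs
    have h4 : n + 1 - s = (n - s) + 1 := by omega
    rw [Matrix.mulVecLin_apply, Matrix.mulVec_mulVec, h4, pow_succ']

lemma moment_yy {Ω : Type*} [MeasurableSpace Ω] (P : Measure Ω) [IsProbabilityMeasure P]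
    {N : ℕ} {μ : ℝ} {A : Matrix (Fin N) (Fin N) ℝ} (hA : A.IsSymm)
    {x y : ℕ → Ω → Fin N → ℝ}
    (hy0 : ∀ ω, y 0 ω = μ • x 0 ω)
    (hyrec : ∀ t ω, y (t + 1) ω = A.mulVec (y t ω) + μ • x (t + 1) ω)
    (hint : ∀ p q : ℕ × Fin N, Integrable (fun ω => x p.1 ω p.2 * x q.1 ω q.2) P)
    (hval : ∀ p q : ℕ × Fin N, ∫ ω, x p.1 ω p.2 * x q.1 ω q.2 ∂P = if p = q then 1 else 0)
    (a b : ℕ) (hab : b ≤ a) (i j : Fin N) :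
    Integrable (fun ω => y a ω i * y b ω j) P ∧
    ∫ ω, y a ω i * y b ω j ∂P
      = μ ^ 2 * ∑ s ∈ Finset.range (b+1), (A ^ (a + b - 2*s)) i j := by
  classical
  set Fa : Finset (ℕ × Fin N) := Finset.range (a+1) ×ˢ Finset.univ with hFa
  set Fb : Finset (ℕ × Fin N) := Finset.range (b+1) ×ˢ Finset.univ with hFb
  set c : (ℕ × Fin N) → (ℕ × Fin N) → ℝ :=
    fun p q => (A ^ (a - p.1)) i p.2 * (A ^ (b - q.1)) j q.2 with hc
  have hsub : Fb ⊆ Fa := by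
    rw [hFa, hFb]
    exact Finset.product_subset_product (Finset.range_subset_range.mpr (by omega)) le_rfl
  have coord : ∀ (n : ℕ) (ω : Ω) (i : Fin N), y n ω i
      = μ * ∑ p ∈ Finset.range (n+1) ×ˢ (Finset.univ : Finset (Fin N)),
          (A ^ (n - p.1)) i p.2 * x p.1 ω p.2 := by
    intro n ω i
    rw [y_expand hy0 hyrec n ω, Finset.sum_product]
    simp [Matrix.mulVec, dotProduct, Finset.sum_apply, Pi.smul_apply, smul_eq_mul,
      Finset.mul_sum]
  have h1 : ∀ ω, y a ω i * y b ω j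
      = μ ^ 2 * ∑ p ∈ Fa, ∑ q ∈ Fb, c p q * (x p.1 ω p.2 * x q.1 ω q.2) := by
    intro ω
    rw [coord a ω i, coord b ω j, ← hFa, ← hFb, mul_mul_mul_comm, ← pow_two,
      Finset.sum_mul_sum]
    congr 1
    exact Finset.sum_congr rfl fun p _ => Finset.sum_congr rfl fun q _ =>
      mul_mul_mul_comm _ _ _ _
  have hterm : ∀ p q : ℕ × Fin N,
      Integrable (fun ω => c p q * (x p.1 ω p.2 * x q.1 ω q.2)) P :=
    fun p q => (hint p q).const_mul _
  have hinner : ∀ p : ℕ × Fin N,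
      Integrable (fun ω => ∑ q ∈ Fb, c p q * (x p.1 ω p.2 * x q.1 ω q.2)) P :=
    fun p => integrable_finset_sum _ fun q _ => hterm p q
  have hsum : Integrable
      (fun ω => ∑ p ∈ Fa, ∑ q ∈ Fb, c p q * (x p.1 ω p.2 * x q.1 ω q.2)) P :=
    integrable_finset_sum _ fun p _ => hinner p
  have hInt : Integrable (fun ω => y a ω i * y b ω j) P := by
    have e : (fun ω => y a ω i * y b ω j)
        = fun ω => μ ^ 2 * ∑ p ∈ Fa, ∑ q ∈ Fb, c p q * (x p.1 ω p.2 * x q.1 ω q.2) :=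
      funext h1
    rw [e]
    exact hsum.const_mul _
  refine ⟨hInt, ?_⟩
  calc ∫ ω, y a ω i * y b ω j ∂P
      = ∫ ω, μ ^ 2 * ∑ p ∈ Fa, ∑ q ∈ Fb, c p q * (x p.1 ω p.2 * x q.1 ω q.2) ∂P :=
        integral_congr_ae (Filter.Eventually.of_forall h1)
    _ = μ ^ 2 * ∑ p ∈ Fa, ∑ q ∈ Fb, c p q * ∫ ω, x p.1 ω p.2 * x q.1 ω q.2 ∂P := by
        rw [integral_const_mul, integral_finset_sum _ fun p _ => hinner p]
        congr 1
        refine Finset.sum_congr rfl fun p _ => ?_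
        rw [integral_finset_sum _ fun q _ => hterm p q]
        exact Finset.sum_congr rfl fun q _ => integral_const_mul _ _
    _ = μ ^ 2 * ∑ p ∈ Fa, ∑ q ∈ Fb, (if q = p then c p q else 0) := by
        congr 1
        refine Finset.sum_congr rfl fun p _ => Finset.sum_congr rfl fun q _ => ?_
        rw [hval p q]
        rcases eq_or_ne p q with h | h
        · subst h; simp
        · simp [h, Ne.symm h]
    _ = μ ^ 2 * ∑ p ∈ Fa, (if p ∈ Fb then c p p else 0) := by
        congr 1
        exact Finset.sum_congr rfl fun p _ => Finset.sum_ite_eq' Fb p (fun q => c p q)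
    _ = μ ^ 2 * ∑ p ∈ Fb, c p p := by
        rw [Finset.sum_ite_mem, Finset.inter_eq_right.mpr hsub]
    _ = μ ^ 2 * ∑ s ∈ Finset.range (b+1), (A ^ (a + b - 2*s)) i j := by
        congr 1
        rw [hFb, Finset.sum_product]
        refine Finset.sum_congr rfl fun s hs => ?_
        have hsb : s ≤ b := by have := Finset.mem_range.mp hs; omega
        calc ∑ k : Fin N, c (s,k) (s,k)
            = ∑ k : Fin N, (A ^ (a-s)) i k * (A ^ (b-s)) k j := by
              refine Finset.sum_congr rfl fun k _ => ?_
              simp only [hc]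
              rw [(hA.pow (b-s)).apply k j]
          _ = (A ^ (a-s) * A ^ (b-s)) i j := (Matrix.mul_apply).symm
          _ = (A ^ (a + b - 2*s)) i j := by
              have h2 : a - s + (b - s) = a + b - 2*s := by omega
              rw [← pow_add, h2]

end EstimatorAux

/-- Proposition 1 (submatrix part): for every subset `S` of the nodes and every `t ≥ 1`,
the submatrix `[Aᵘ(t)]_S` of the estimator `Aᵘ(t) = (1/μ²)(y_{t+1} yₜᵀ − y_{t+2} y_{t−1}ᵀ)`
equals `(1/μ²)([y_{t+1}]_S([yₜ]_S)ᵀ − [y_{t+2}]_S([y_{t−1}]_S)ᵀ)`, i.e. it is computable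
from the observed coordinates alone, and it is an unbiased estimator of `A_S`:
`E[[Aᵘ(t)]_S] = A_S`. -/
theorem estimator_unbiased_submatrix
    {Ω : Type*} [MeasurableSpace Ω] (P : Measure Ω) [IsProbabilityMeasure P]
    (N : ℕ) (hN : 1 ≤ N) (μ : ℝ) (hμ : μ ∈ Set.Ioo (0 : ℝ) 1)
    (A : Matrix (Fin N) (Fin N) ℝ) (hA : A.IsSymm)
    (x : ℕ → Ω → Fin N → ℝ)
    (hxmeas : ∀ t k, Measurable (fun ω => x t ω k))
    (hxindep : iIndepFun
      (fun (p : ℕ × Fin N) ω => x p.1 ω p.2) P)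
    (hxgauss : ∀ t k, P.map (fun ω => x t ω k) = gaussianReal 0 1)
    (y : ℕ → Ω → Fin N → ℝ)
    (hy0 : ∀ ω, y 0 ω = μ • x 0 ω)
    (hyrec : ∀ t ω, y (t + 1) ω = A.mulVec (y t ω) + μ • x (t + 1) ω)
    (t : ℕ) (ht : 1 ≤ t)
    (Au : Ω → Matrix (Fin N) (Fin N) ℝ)
    (hAu : ∀ ω, Au ω = (μ ^ 2)⁻¹ •
      (Matrix.vecMulVec (y (t + 1) ω) (y t ω) - Matrix.vecMulVec (y (t + 2) ω) (y (t - 1) ω)))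
    (S : Finset (Fin N)) :
    (∀ ω, (Au ω).submatrix (fun i : {a // a ∈ S} => i.1) (fun j : {a // a ∈ S} => j.1)
        = Matrix.of fun (i : {a // a ∈ S}) (j : {a // a ∈ S}) =>
            (μ ^ 2)⁻¹ * (y (t + 1) ω i.1 * y t ω j.1 - y (t + 2) ω i.1 * y (t - 1) ω j.1)) ∧
      (Matrix.of fun (i : {a // a ∈ S}) (j : {a // a ∈ S}) => ∫ ω, Au ω i.1 j.1 ∂P)
        = A.submatrix (fun i : {a // a ∈ S} => i.1) (fun j : {a // a ∈ S} => j.1) := by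
  constructor
  · intro ω
    ext i j
    simp only [Matrix.submatrix_apply, Matrix.of_apply, hAu ω, Matrix.smul_apply,
      Matrix.sub_apply, Matrix.vecMulVec_apply, smul_eq_mul]
  · have hint : ∀ p q : ℕ × Fin N, Integrable (fun ω => x p.1 ω p.2 * x q.1 ω q.2) P :=
      EstimatorAux.int_xx P x hxmeas hxgauss hxindep
    have hval : ∀ p q : ℕ × Fin N,
        ∫ ω, x p.1 ω p.2 * x q.1 ω q.2 ∂P = if p = q then 1 else 0 :=
      EstimatorAux.integral_xx P x hxmeas hxgauss hxindep
    ext i j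
    simp only [Matrix.of_apply, Matrix.submatrix_apply]
    have m1 := EstimatorAux.moment_yy P hA hy0 hyrec hint hval (t+1) t (by omega) i.1 j.1
    have m2 := EstimatorAux.moment_yy P hA hy0 hyrec hint hval (t+2) (t-1) (by omega) i.1 j.1
    have hfun : ∀ ω, Au ω i.1 j.1
        = (μ^2)⁻¹ * (y (t+1) ω i.1 * y t ω j.1 - y (t+2) ω i.1 * y (t-1) ω j.1) := by
      intro ω
      rw [hAu ω]
      simp only [Matrix.smul_apply, Matrix.sub_apply, Matrix.vecMulVec_apply, smul_eq_mul]
    have hμ2 : (μ:ℝ)^2 ≠ 0 := pow_ne_zero 2 (ne_of_gt hμ.1)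
    calc ∫ ω, Au ω i.1 j.1 ∂P
        = ∫ ω, (μ^2)⁻¹ * (y (t+1) ω i.1 * y t ω j.1 - y (t+2) ω i.1 * y (t-1) ω j.1) ∂P :=
          integral_congr_ae (Filter.Eventually.of_forall hfun)
      _ = (μ^2)⁻¹ * ((∫ ω, y (t+1) ω i.1 * y t ω j.1 ∂P)
            - ∫ ω, y (t+2) ω i.1 * y (t-1) ω j.1 ∂P) := by
          rw [integral_const_mul, integral_sub m1.1 m2.1]
      _ = A i.1 j.1 := by
          rw [m1.2, m2.2]
          have e1 : ∀ s : ℕ, t + 1 + t - 2*s = 2*t+1 - 2*s := fun s => by omega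
          have e2 : ∀ s : ℕ, t + 2 + (t-1) - 2*s = 2*t+1 - 2*s := fun s => by omega
          have e3 : t - 1 + 1 = t := by omega
          simp only [e1, e2, e3]
          rw [Finset.sum_range_succ]
          have e4 : 2*t+1 - 2*t = 1 := by omega
          rw [e4, pow_one]
          field_simp
          rw [add_sub_cancel_left]; exact mul_div_cancel_left₀ _ (ne_of_gt hμ.1)
end

section
/- For every j ≥ 1 and all times k ≠ t, the summed cross-covariance of the matrices x_{k+j} y_kᵀ and x_{t+j} y_tᵀ vanishes: Tr[Cov(x_{k+j} y_kᵀ, x_{t+j} y_tᵀ)] = Σ_{a,b=1}^N Cov((x_{k+j} y_kᵀ)_{ab}, (x_{t+j} y_tᵀ)_{ab}) = 0. -/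
open MeasureTheory ProbabilityTheory Matrix Filter

/-- A standard Gaussian random variable has zero (Bochner) integral, with no
integrability needed as input. -/
lemma gaussian_integral_id_zero' {Ω : Type*} [MeasurableSpace Ω] (P : Measure Ω)
    (X : Ω → ℝ) (hX : Measurable X) (h : P.map X = gaussianReal 0 1) :
    ∫ ω, X ω ∂P = 0 := by
  have h2 : P.map (fun ω => (-1 : ℝ) * X ω) = gaussianReal 0 1 := by
    have : P.map (fun ω => (-1 : ℝ) * X ω) = (P.map X).map (fun z => (-1 : ℝ) * z) := by
      rw [Measure.map_map (by fun_prop) hX]; rfl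
    rw [this, h, gaussianReal_map_const_mul]
    norm_num
  have e1 : ∫ z, z ∂(P.map X) = ∫ ω, X ω ∂P :=
    integral_map hX.aemeasurable aestronglyMeasurable_id
  have e2 : ∫ z, z ∂(P.map (fun ω => (-1 : ℝ) * X ω)) = ∫ ω, (-1 : ℝ) * X ω ∂P :=
    integral_map (by fun_prop) aestronglyMeasurable_id
  rw [h] at e1
  rw [h2] at e2
  simp only [neg_one_mul, integral_neg] at e2
  linarith

/-- If a random variable is a function of the coordinates with time indices in a finite
set `s`, and `v ∉ s`, then `x v · a` is independent of it. -/
lemma indep_of_time_not_mem {Ω : Type*} [MeasurableSpace Ω] {P : Measure Ω} {N : ℕ}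
    (x : ℕ → Ω → Fin N → ℝ)
    (hxmeas : ∀ t k, Measurable (fun ω => x t ω k))
    (hxindep : iIndepFun (β := fun _ : ℕ × Fin N => ℝ)
      (fun p ω => x p.1 ω p.2) P)
    (v : ℕ) (a : Fin N) (s : Finset ℕ) (hv : v ∉ s)
    (g : (ℕ × Fin N → ℝ) → ℝ) (hg : Measurable g)
    (hgdep : ∀ f f' : ℕ × Fin N → ℝ, (∀ p : ℕ × Fin N, p.1 ∈ s → f p = f' p) → g f = g f') :
    IndepFun (fun ω => x v ω a) (fun ω => g (fun p => x p.1 ω p.2)) P := by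
  classical
  set S : Finset (ℕ × Fin N) := {(v, a)} with hS
  set T : Finset (ℕ × Fin N) := s ×ˢ Finset.univ with hT
  have hST : Disjoint S T := by
    rw [Finset.disjoint_left]
    intro p hp hpT
    rw [hS, Finset.mem_singleton] at hp
    rw [hp] at hpT
    rw [hT, Finset.mem_product] at hpT
    exact hv hpT.1
  have base := hxindep.indepFun_finset S T hST (fun p => hxmeas p.1 p.2)
  have hL : Measurable (fun f : S → ℝ => f ⟨(v, a), by simp [hS]⟩) := measurable_pi_apply _
  have hR : Measurable (fun f : T → ℝ =>
      g (fun p => if hp : p ∈ T then f ⟨p, hp⟩ else 0)) := by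
    apply hg.comp
    apply measurable_pi_lambda
    intro p
    by_cases hp : p ∈ T
    · simpa [hp] using measurable_pi_apply (⟨p, hp⟩ : T)
    · simpa [hp] using (measurable_const : Measurable fun _ : T → ℝ => (0 : ℝ))
  have hcomp := base.comp hL hR
  have key : (fun ω => g (fun p =>
      if hp : p ∈ T then (fun i : T => x i.1.1 ω i.1.2) ⟨p, hp⟩ else 0))
      = (fun ω => g (fun p => x p.1 ω p.2)) := by
    funext ω
    apply hgdep
    intro p hp
    rw [dif_pos (by rw [hT, Finset.mem_product]; exact ⟨hp, Finset.mem_univ _⟩)]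
  rw [← key]
  exact hcomp

/-- For every `j ≥ 1` and all times `k ≠ t`, the summed cross-covariance of the matrices
`x_{k+j} y_kᵀ` and `x_{t+j} y_tᵀ` vanishes:
`Tr[Cov(x_{k+j} y_kᵀ, x_{t+j} y_tᵀ)] = ∑_{a,b} Cov((x_{k+j} y_kᵀ)_{ab}, (x_{t+j} y_tᵀ)_{ab}) = 0`. -/
theorem cross_covariance_trace_eq_zero
    {Ω : Type*} [MeasurableSpace Ω] (P : Measure Ω) [IsProbabilityMeasure P]
    (N : ℕ) (hN : 1 ≤ N) (μ : ℝ) (hμ : μ ∈ Set.Ioo (0 : ℝ) 1)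
    (A : Matrix (Fin N) (Fin N) ℝ) (hA : A.IsSymm)
    (x : ℕ → Ω → Fin N → ℝ)
    (hxmeas : ∀ t k, Measurable (fun ω => x t ω k))
    (hxindep : iIndepFun (β := fun _ : ℕ × Fin N => ℝ)
      (fun p ω => x p.1 ω p.2) P)
    (hxgauss : ∀ t k, P.map (fun ω => x t ω k) = gaussianReal 0 1)
    (y : ℕ → Ω → Fin N → ℝ)
    (hy0 : ∀ ω, y 0 ω = μ • x 0 ω)
    (hyrec : ∀ t ω, y (t + 1) ω = A.mulVec (y t ω) + μ • x (t + 1) ω)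
    (j : ℕ) (hj : 1 ≤ j) (k t : ℕ) (hkt : k ≠ t) :
    ∑ a : Fin N, ∑ b : Fin N,
        ((∫ ω, (x (k + j) ω a * y k ω b) * (x (t + j) ω a * y t ω b) ∂P)
          - (∫ ω, x (k + j) ω a * y k ω b ∂P) * (∫ ω, x (t + j) ω a * y t ω b ∂P))
      = 0 := by
  classical
  -- explicit representation of `y`
  have y_rep : ∀ r ω b, y r ω b
      = ∑ s ∈ Finset.range (r + 1), ∑ c, μ * (A ^ (r - s)) b c * x s ω c := by
    intro r
    induction r with
    | zero =>
      intro ω b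
      simp [hy0, Matrix.one_apply, mul_ite, Finset.sum_ite_eq, mul_comm]
    | succ r ih =>
      intro ω b
      rw [hyrec]
      have hmv : (A.mulVec (y r ω) + μ • x (r + 1) ω) b
          = (∑ c, A b c * y r ω c) + μ * x (r + 1) ω b := by
        simp [Matrix.mulVec, dotProduct]
      rw [hmv, Finset.sum_range_succ]
      congr 1
      · simp_rw [ih, Finset.mul_sum]
        rw [Finset.sum_comm]
        refine Finset.sum_congr rfl fun s hs => ?_
        have hsr : s ≤ r := Nat.lt_succ_iff.mp (Finset.mem_range.mp hs)
        have hpow : r + 1 - s = (r - s) + 1 := by omega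
        rw [hpow, pow_succ']
        rw [Finset.sum_comm]
        refine Finset.sum_congr rfl fun d _ => ?_
        rw [Matrix.mul_apply, Finset.mul_sum, Finset.sum_mul]
        refine Finset.sum_congr rfl fun c _ => ?_
        ring
      · simp [Matrix.one_apply, mul_ite, Finset.sum_ite_eq, mul_comm]
  -- measurability of coordinates of `y`
  have ymeas : ∀ r b, Measurable (fun ω => y r ω b) := by
    intro r b
    have : (fun ω => y r ω b)
        = fun ω => ∑ s ∈ Finset.range (r + 1), ∑ c, μ * (A ^ (r - s)) b c * x s ω c := by
      funext ω; exact y_rep r ω b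
    rw [this]
    exact Finset.measurable_sum _ fun s _ =>
      Finset.measurable_sum _ fun c _ => (hxmeas s c).const_mul _
  -- zero mean of the coordinates of x
  have xmean : ∀ v a, ∫ ω, x v ω a ∂P = 0 := fun v a =>
    gaussian_integral_id_zero' P _ (hxmeas v a) (hxgauss v a)
  -- the main claim, for ordered times
  have hmain : ∀ k t : ℕ, k < t → ∀ a b : Fin N,
      ((∫ ω, (x (k + j) ω a * y k ω b) * (x (t + j) ω a * y t ω b) ∂P)
        - (∫ ω, x (k + j) ω a * y k ω b ∂P) * (∫ ω, x (t + j) ω a * y t ω b ∂P)) = 0 := by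
    intro k t hklt a b
    set u := k + j with hu
    set v := t + j with hv
    set s : Finset ℕ := insert u (Finset.range (t + 1)) with hs
    have hvs : v ∉ s := by
      rw [hs, Finset.mem_insert]
      push_neg
      constructor
      · omega
      · rw [Finset.mem_range]; omega
    -- the auxiliary functions of the coordinates
    set G : (ℕ × Fin N → ℝ) → ℝ := fun f =>
      ∑ s' ∈ Finset.range (t + 1), ∑ c, μ * (A ^ (t - s')) b c * f (s', c) with hG
    set K : (ℕ × Fin N → ℝ) → ℝ := fun f =>
      ∑ s' ∈ Finset.range (k + 1), ∑ c, μ * (A ^ (k - s')) b c * f (s', c) with hK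
    set F : (ℕ × Fin N → ℝ) → ℝ := fun f => f (u, a) * (K f * G f) with hF
    have hGmeas : Measurable G := Finset.measurable_sum _ fun s' _ =>
      Finset.measurable_sum _ fun c _ => (measurable_pi_apply (s', c)).const_mul _
    have hKmeas : Measurable K := Finset.measurable_sum _ fun s' _ =>
      Finset.measurable_sum _ fun c _ => (measurable_pi_apply (s', c)).const_mul _
    have hFmeas : Measurable F :=
      (measurable_pi_apply (u, a)).mul (hKmeas.mul hGmeas)
    have hGdep : ∀ f f' : ℕ × Fin N → ℝ,
        (∀ p : ℕ × Fin N, p.1 ∈ s → f p = f' p) → G f = G f' := by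
      intro f f' hff
      refine Finset.sum_congr rfl fun s' hs' => Finset.sum_congr rfl fun c _ => ?_
      rw [hff (s', c) (by rw [hs]; exact Finset.mem_insert_of_mem hs')]
    have hFdep : ∀ f f' : ℕ × Fin N → ℝ,
        (∀ p : ℕ × Fin N, p.1 ∈ s → f p = f' p) → F f = F f' := by
      intro f f' hff
      have h1 : f (u, a) = f' (u, a) := hff (u, a) (by rw [hs]; exact Finset.mem_insert_self _ _)
      have h2 : K f = K f' := by
        refine Finset.sum_congr rfl fun s' hs' => Finset.sum_congr rfl fun c _ => ?_
        rw [hff (s', c)]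
        rw [hs]
        refine Finset.mem_insert_of_mem ?_
        rw [Finset.mem_range] at hs' ⊢
        omega
      have h3 : G f = G f' := hGdep f f' hff
      rw [hF]
      dsimp only
      rw [h1, h2, h3]
    -- identification of the auxiliary functions with the random variables
    have hGx : (fun ω => G (fun p => x p.1 ω p.2)) = fun ω => y t ω b := by
      funext ω
      simp only [hG]
      exact (y_rep t ω b).symm
    have hFx : (fun ω => F (fun p => x p.1 ω p.2))
        = fun ω => x u ω a * (y k ω b * y t ω b) := by
      funext ω
      simp only [hF, hK, hG]
      rw [← y_rep k ω b, ← y_rep t ω b]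
    -- independence facts
    have hind1 : IndepFun (fun ω => x v ω a)
        (fun ω => x u ω a * (y k ω b * y t ω b)) P := by
      rw [← hFx]
      exact indep_of_time_not_mem x hxmeas hxindep v a s hvs F hFmeas hFdep
    have hind2 : IndepFun (fun ω => x v ω a) (fun ω => y t ω b) P := by
      rw [← hGx]
      exact indep_of_time_not_mem x hxmeas hxindep v a s hvs G hGmeas hGdep
    -- first integral vanishes
    have int1 : (∫ ω, (x u ω a * y k ω b) * (x v ω a * y t ω b) ∂P) = 0 := by
      have hre : (∫ ω, (x u ω a * y k ω b) * (x v ω a * y t ω b) ∂P)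
          = ∫ ω, x v ω a * (x u ω a * (y k ω b * y t ω b)) ∂P :=
        integral_congr_ae (Filter.Eventually.of_forall fun ω => by ring)
      rw [hre, hind1.integral_fun_mul_eq_mul_integral (hxmeas v a).aestronglyMeasurable
        (((hxmeas u a).mul ((ymeas k b).mul (ymeas t b))).aestronglyMeasurable),
        xmean v a, zero_mul]
    -- second integral vanishes
    have int2 : (∫ ω, x v ω a * y t ω b ∂P) = 0 := by
      rw [hind2.integral_fun_mul_eq_mul_integral (hxmeas v a).aestronglyMeasurable
        (ymeas t b).aestronglyMeasurable, xmean v a, zero_mul]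
    rw [int1, int2, mul_zero, sub_zero]
  -- conclude
  refine Finset.sum_eq_zero fun a _ => Finset.sum_eq_zero fun b _ => ?_
  rcases hkt.lt_or_gt with h | h
  · exact hmain k t h a b
  · have hre : (∫ ω, (x (k + j) ω a * y k ω b) * (x (t + j) ω a * y t ω b) ∂P)
        = ∫ ω, (x (t + j) ω a * y t ω b) * (x (k + j) ω a * y k ω b) ∂P :=
      integral_congr_ae (Filter.Eventually.of_forall fun ω => by ring)
    rw [hre, mul_comm (∫ ω, x (k + j) ω a * y k ω b ∂P)]
    exact hmain t k h a b
end

section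
/- For every j ≥ 1 and every n ≥ 1, the total variance of the sample average (1/n) Σ_{t=1}^n x_{t+j} y_tᵀ equals (N/n²) · Σ_{t=1}^n Tr[R_0(t)], where R_0(t) := E[y_t y_tᵀ]; that is, Σ_{a,b=1}^N Var(((1/n) Σ_{t=1}^n x_{t+j} y_tᵀ)_{ab}) = (N/n²) Tr[Σ_{t=1}^n R_0(t)]. -/
open MeasureTheory ProbabilityTheory Matrix Filter

section GaussianMoments

open Real

private lemma e_eq' : (fun x : ℝ => Real.exp (-(1/2 : ℝ) * x^2)) = fun x => Real.exp (-x^2/2) := by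
  funext x; congr 1; ring

private lemma integrable_exp_half' : Integrable (fun x : ℝ => Real.exp (-x^2/2)) := by
  have := integrable_exp_neg_mul_sq (b := (1/2:ℝ)) (by norm_num)
  rwa [e_eq'] at this

private lemma integrable_mul_exp_half' : Integrable (fun x : ℝ => x * Real.exp (-x^2/2)) := by
  have := integrable_mul_exp_neg_mul_sq (b := (1/2:ℝ)) (by norm_num)
  refine this.congr (Eventually.of_forall fun x => ?_)
  congr 1; ring

private lemma integrable_sq_exp_half' : Integrable (fun x : ℝ => x^2 * Real.exp (-x^2/2)) := by
  have := integrable_rpow_mul_exp_neg_mul_sq (b := (1/2:ℝ)) (by norm_num) (s := ((2:ℕ):ℝ)) (by norm_num)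
  refine this.congr (Eventually.of_forall fun x => ?_)
  show x ^ ((2:ℕ):ℝ) * Real.exp (-(1/2) * x^2) = x^2 * Real.exp (-x^2/2)
  rw [Real.rpow_natCast]
  congr 1; ring

private lemma integral_exp_half' : ∫ x : ℝ, Real.exp (-x^2/2) = Real.sqrt (2*π) := by
  rw [← e_eq', integral_gaussian, show π/(1/2:ℝ) = 2*π by ring]

private lemma integral_mul_exp_half' : ∫ x : ℝ, x * Real.exp (-x^2/2) = 0 := by
  have h : ∫ x : ℝ, -x * Real.exp (-(-x)^2/2) = ∫ x : ℝ, x * Real.exp (-x^2/2) :=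
    integral_neg_eq_self (fun x : ℝ => x * Real.exp (-x^2/2)) volume
  rw [show (fun x : ℝ => -x * Real.exp (-(-x)^2/2)) = fun x : ℝ => -(x * Real.exp (-x^2/2)) from
    funext fun x => by ring_nf, integral_neg] at h
  linarith

private lemma integral_sq_exp_half' : ∫ x : ℝ, x^2 * Real.exp (-x^2/2) = Real.sqrt (2*π) := by
  have hu : ∀ x : ℝ, HasDerivAt (fun x : ℝ => x) (1 : ℝ) x := fun x => hasDerivAt_id x
  have hv : ∀ x : ℝ, HasDerivAt (fun x : ℝ => -Real.exp (-x^2/2)) (x * Real.exp (-x^2/2)) x := by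
    intro x
    have h1 : HasDerivAt (fun x : ℝ => -x^2/2) (-x) x := by
      refine ((hasDerivAt_pow 2 x).neg.div_const 2).congr_deriv ?_
      push_cast; ring
    have h2 := (Real.hasDerivAt_exp (-x^2/2)).comp x h1
    refine h2.neg.congr_deriv ?_
    ring
  have key := integral_mul_deriv_eq_deriv_mul_of_integrable (fun x _ => hu x) (fun x _ => hv x)
    (integrable_sq_exp_half'.congr (Eventually.of_forall fun x => by simp [Pi.mul_apply]; ring))
    (integrable_exp_half'.neg.congr (Eventually.of_forall fun x => by simp [Pi.mul_apply]))
    (integrable_mul_exp_half'.neg.congr (Eventually.of_forall fun x => by simp [Pi.mul_apply]))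
  simp only [one_mul, integral_neg] at key
  rw [show (∫ x : ℝ, x * (x * Real.exp (-x^2/2))) = ∫ x : ℝ, x^2 * Real.exp (-x^2/2) from by
    congr 1; funext x; ring] at key
  rw [key, neg_neg, integral_exp_half']

private lemma pdf01_eq (x : ℝ) :
    gaussianPDFReal 0 1 x = (Real.sqrt (2*π))⁻¹ * Real.exp (-x^2/2) := by
  simp [gaussianPDFReal]

private lemma sqrt_two_pi_ne : Real.sqrt (2*π) ≠ 0 :=
  ne_of_gt (Real.sqrt_pos.2 (by positivity))

private lemma gauss01_eq : gaussianReal 0 1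
    = MeasureTheory.volume.withDensity
        (fun x => ((Real.toNNReal (gaussianPDFReal 0 1 x) : NNReal) : ENNReal)) := by
  rw [gaussianReal_of_var_ne_zero _ one_ne_zero]; rfl

private lemma integral_gauss01 (g : ℝ → ℝ) :
    ∫ x, g x ∂(gaussianReal 0 1) = ∫ x, gaussianPDFReal 0 1 x * g x := by
  rw [gauss01_eq, integral_withDensity_eq_integral_smul
    ((measurable_gaussianPDFReal 0 1).real_toNNReal) g]
  congr 1; funext x
  simp [NNReal.smul_def, Real.coe_toNNReal _ (gaussianPDFReal_nonneg 0 1 x)]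

private lemma integrable_gauss01 {g : ℝ → ℝ}
    (hg : Integrable (fun x => gaussianPDFReal 0 1 x * g x)) :
    Integrable g (gaussianReal 0 1) := by
  rw [gauss01_eq,
    integrable_withDensity_iff_integrable_smul ((measurable_gaussianPDFReal 0 1).real_toNNReal)]
  refine hg.congr (Eventually.of_forall fun x => ?_)
  simp [NNReal.smul_def, Real.coe_toNNReal _ (gaussianPDFReal_nonneg 0 1 x)]

private lemma g01_integrable_id : Integrable (fun s : ℝ => s) (gaussianReal 0 1) := by
  refine integrable_gauss01 ?_
  refine (integrable_mul_exp_half'.const_mul ((Real.sqrt (2*π))⁻¹)).congr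
    (Eventually.of_forall fun x => ?_)
  show (Real.sqrt (2*π))⁻¹ * (x * Real.exp (-x^2/2)) = gaussianPDFReal 0 1 x * x
  rw [pdf01_eq]; ring

private lemma g01_integral_id : ∫ s, s ∂(gaussianReal 0 1) = 0 := by
  rw [integral_gauss01]
  rw [show (fun x : ℝ => gaussianPDFReal 0 1 x * x)
      = fun x : ℝ => (Real.sqrt (2*π))⁻¹ * (x * Real.exp (-x^2/2)) from
    funext fun x => by rw [pdf01_eq]; ring]
  rw [integral_const_mul, integral_mul_exp_half', mul_zero]

private lemma g01_integrable_sq : Integrable (fun s : ℝ => s * s) (gaussianReal 0 1) := by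
  refine integrable_gauss01 ?_
  refine (integrable_sq_exp_half'.const_mul ((Real.sqrt (2*π))⁻¹)).congr
    (Eventually.of_forall fun x => ?_)
  show (Real.sqrt (2*π))⁻¹ * (x^2 * Real.exp (-x^2/2)) = gaussianPDFReal 0 1 x * (x * x)
  rw [pdf01_eq]; ring

private lemma g01_integral_sq : ∫ s, s * s ∂(gaussianReal 0 1) = 1 := by
  rw [integral_gauss01]
  rw [show (fun x : ℝ => gaussianPDFReal 0 1 x * (x * x))
      = fun x : ℝ => (Real.sqrt (2*π))⁻¹ * (x^2 * Real.exp (-x^2/2)) from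
    funext fun x => by rw [pdf01_eq]; ring]
  rw [integral_const_mul, integral_sq_exp_half', inv_mul_cancel₀ sqrt_two_pi_ne]

end GaussianMoments

section IIDFamily

variable {Ω : Type*} [MeasurableSpace Ω] {P : Measure Ω} [IsProbabilityMeasure P]
  {ι : Type*} [DecidableEq ι] {z : ι → Ω → ℝ}

private lemma zint (hm : ∀ p, Measurable (z p)) (hg : ∀ p, P.map (z p) = gaussianReal 0 1)
    (p : ι) : Integrable (z p) P := by
  have h0 : Integrable (fun s : ℝ => s) (P.map (z p)) := by rw [hg p]; exact g01_integrable_id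
  exact (integrable_map_measure aestronglyMeasurable_id ((hm p).aemeasurable)).1 h0

private lemma zmean (hm : ∀ p, Measurable (z p)) (hg : ∀ p, P.map (z p) = gaussianReal 0 1)
    (p : ι) : ∫ ω, z p ω ∂P = 0 := by
  have h := integral_map (μ := P) ((hm p).aemeasurable)
    (f := fun s : ℝ => s) aestronglyMeasurable_id
  rw [hg p, g01_integral_id] at h
  exact h.symm

private lemma zsq_int (hm : ∀ p, Measurable (z p)) (hg : ∀ p, P.map (z p) = gaussianReal 0 1)
    (p : ι) : Integrable (fun ω => z p ω * z p ω) P := by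
  have h0 : Integrable (fun s : ℝ => s * s) (P.map (z p)) := by rw [hg p]; exact g01_integrable_sq
  exact (integrable_map_measure (measurable_id.mul measurable_id).aestronglyMeasurable
    ((hm p).aemeasurable)).1 h0

private lemma zsq_mean (hm : ∀ p, Measurable (z p)) (hg : ∀ p, P.map (z p) = gaussianReal 0 1)
    (p : ι) : ∫ ω, z p ω * z p ω ∂P = 1 := by
  have h := integral_map (μ := P) ((hm p).aemeasurable)
    (f := fun s : ℝ => s * s) (measurable_id.mul measurable_id).aestronglyMeasurable
  rw [hg p, g01_integral_sq] at h
  exact h.symm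

private lemma zmem2 (hm : ∀ p, Measurable (z p)) (hg : ∀ p, P.map (z p) = gaussianReal 0 1)
    (p : ι) : MemLp (z p) 2 P :=
  (memLp_two_iff_integrable_sq (hm p).aestronglyMeasurable).2
    ((zsq_int hm hg p).congr (Eventually.of_forall fun ω => (pow_two (z p ω)).symm))

private lemma indep_prod_single (hm : ∀ p, Measurable (z p))
    (hi : iIndepFun z P)
    (S : Finset ι) (p : ι) (hp : p ∉ S) (φ : ((i : S) → ℝ) → ℝ) (hφ : Measurable φ) :
    IndepFun (fun ω => φ (fun i => z i ω)) (z p) P := by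
  have h := hi.indepFun_finset S {p} (Finset.disjoint_singleton_right.mpr hp) hm
  exact h.comp hφ (measurable_pi_apply (⟨p, Finset.mem_singleton_self p⟩ : ({p} : Finset ι)))

private lemma indep_pair_single (hm : ∀ p, Measurable (z p))
    (hi : iIndepFun z P)
    (q r p : ι) (h1 : q ≠ p) (h2 : r ≠ p) :
    IndepFun (fun ω => z q ω * z r ω) (z p) P := by
  have hmem1 : q ∈ ({q, r} : Finset ι) := by simp
  have hmem2 : r ∈ ({q, r} : Finset ι) := by simp
  exact indep_prod_single hm hi {q, r} p
    (by simp [Ne.symm h1, Ne.symm h2])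
    (fun v => v ⟨q, hmem1⟩ * v ⟨r, hmem2⟩)
    ((measurable_pi_apply (⟨q, hmem1⟩ : ({q, r} : Finset ι))).mul
      (measurable_pi_apply (⟨r, hmem2⟩ : ({q, r} : Finset ι))))

private lemma indep_triple_single (hm : ∀ p, Measurable (z p))
    (hi : iIndepFun z P)
    (q r s p : ι) (h1 : q ≠ p) (h2 : r ≠ p) (h3 : s ≠ p) :
    IndepFun (fun ω => z q ω * z r ω * z s ω) (z p) P := by
  have hmem1 : q ∈ ({q, r, s} : Finset ι) := by simp
  have hmem2 : r ∈ ({q, r, s} : Finset ι) := by simp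
  have hmem3 : s ∈ ({q, r, s} : Finset ι) := by simp
  exact indep_prod_single hm hi {q, r, s} p
    (by simp [Ne.symm h1, Ne.symm h2, Ne.symm h3])
    (fun v => v ⟨q, hmem1⟩ * v ⟨r, hmem2⟩ * v ⟨s, hmem3⟩)
    (((measurable_pi_apply (⟨q, hmem1⟩ : ({q, r, s} : Finset ι))).mul
      (measurable_pi_apply (⟨r, hmem2⟩ : ({q, r, s} : Finset ι)))).mul
      (measurable_pi_apply (⟨s, hmem3⟩ : ({q, r, s} : Finset ι))))

private lemma pair_int (hm : ∀ p, Measurable (z p))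
    (hi : iIndepFun z P)
    (hg : ∀ p, P.map (z p) = gaussianReal 0 1)
    (q r : ι) (h : q ≠ r) : ∫ ω, z q ω * z r ω ∂P = 0 := by
  rw [(hi.indepFun h).integral_fun_mul_eq_mul_integral (hm q).aestronglyMeasurable (hm r).aestronglyMeasurable,
    zmean hm hg, zero_mul]

private lemma pair_int_eq (hm : ∀ p, Measurable (z p))
    (hi : iIndepFun z P)
    (hg : ∀ p, P.map (z p) = gaussianReal 0 1)
    (q r : ι) : ∫ ω, z q ω * z r ω ∂P = if q = r then 1 else 0 := by
  split
  · next h => subst h; exact zsq_mean hm hg q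
  · next h => exact pair_int hm hi hg q r h

private lemma pair_integrable (hm : ∀ p, Measurable (z p))
    (hi : iIndepFun z P)
    (hg : ∀ p, P.map (z p) = gaussianReal 0 1)
    (q r : ι) : Integrable (fun ω => z q ω * z r ω) P := by
  by_cases h : q = r
  · subst h; exact zsq_int hm hg q
  · exact (hi.indepFun h).integrable_mul (zint hm hg q) (zint hm hg r)

private lemma pair_mem2 (hm : ∀ p, Measurable (z p))
    (hi : iIndepFun z P)
    (hg : ∀ p, P.map (z p) = gaussianReal 0 1)
    {q r : ι} (h : q ≠ r) : MemLp (fun ω => z q ω * z r ω) 2 P := by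
  refine (memLp_two_iff_integrable_sq (f := fun ω => z q ω * z r ω)
    (((hm q).mul (hm r)).aestronglyMeasurable)).2 ?_
  have hind : IndepFun (fun ω => z q ω * z q ω) (fun ω => z r ω * z r ω) P :=
    (hi.indepFun h).comp (measurable_id.mul measurable_id) (measurable_id.mul measurable_id)
  have hint : Integrable (fun ω => (z q ω * z q ω) * (z r ω * z r ω)) P :=
    hind.integrable_mul (zsq_int hm hg q) (zsq_int hm hg r)
  exact hint.congr (Eventually.of_forall fun ω => by ring)

private lemma quad_integrable (hm : ∀ p, Measurable (z p))
    (hi : iIndepFun z P)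
    (hg : ∀ p, P.map (z p) = gaussianReal 0 1)
    {p q p' q' : ι} (h1 : p ≠ q) (h2 : p' ≠ q') :
    Integrable (fun ω => (z p ω * z q ω) * (z p' ω * z q' ω)) P := by
  have m1 := pair_mem2 hm hi hg h1
  have m2 := pair_mem2 hm hi hg h2
  have hpqr : (1 : ENNReal) / 1 = 1/2 + 1/2 := by rw [ENNReal.add_halves]; simp
  have := memLp_one_iff_integrable.1 (m2.smul m1 (r := 1))
  exact this.congr (Eventually.of_forall fun ω => by simp [smul_eq_mul])

private lemma quad_lone (hm : ∀ p, Measurable (z p))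
    (hi : iIndepFun z P)
    (hg : ∀ p, P.map (z p) = gaussianReal 0 1)
    {p q p' q' : ι} (h1 : p' ≠ p) (h2 : p' ≠ q) (h3 : p' ≠ q') :
    ∫ ω, (z p ω * z q ω) * (z p' ω * z q' ω) ∂P = 0 := by
  have hre : (fun ω => (z p ω * z q ω) * (z p' ω * z q' ω))
      = fun ω => (z p ω * z q ω * z q' ω) * z p' ω := funext fun ω => by ring
  have hind : IndepFun (fun ω => z p ω * z q ω * z q' ω) (z p') P :=
    indep_triple_single hm hi p q q' p' (Ne.symm h1) (Ne.symm h2) (Ne.symm h3)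
  calc ∫ ω, (z p ω * z q ω) * (z p' ω * z q' ω) ∂P
      = ∫ ω, (z p ω * z q ω * z q' ω) * z p' ω ∂P := by rw [hre]
    _ = (∫ ω, z p ω * z q ω * z q' ω ∂P) * ∫ ω, z p' ω ∂P :=
        hind.integral_fun_mul_eq_mul_integral (((hm p).mul (hm q)).mul (hm q')).aestronglyMeasurable
          (hm p').aestronglyMeasurable
    _ = 0 := by rw [zmean hm hg, mul_zero]

private lemma quad_same (hm : ∀ p, Measurable (z p))
    (hi : iIndepFun z P)
    (hg : ∀ p, P.map (z p) = gaussianReal 0 1)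
    {p q q' : ι} (hq : p ≠ q) (hq' : p ≠ q') :
    ∫ ω, (z p ω * z q ω) * (z p ω * z q' ω) ∂P = if q = q' then 1 else 0 := by
  have hre : (fun ω => (z p ω * z q ω) * (z p ω * z q' ω))
      = fun ω => (z q ω * z q' ω) * (z p ω * z p ω) := funext fun ω => by ring
  have hind : IndepFun (fun ω => z q ω * z q' ω) (fun ω => z p ω * z p ω) P :=
    (indep_pair_single hm hi q q' p (Ne.symm hq) (Ne.symm hq')).comp measurable_id
      (measurable_id.mul measurable_id)
  calc ∫ ω, (z p ω * z q ω) * (z p ω * z q' ω) ∂P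
      = ∫ ω, (z q ω * z q' ω) * (z p ω * z p ω) ∂P := by rw [hre]
    _ = (∫ ω, z q ω * z q' ω ∂P) * ∫ ω, z p ω * z p ω ∂P :=
        hind.integral_fun_mul_eq_mul_integral (((hm q).mul (hm q')).aestronglyMeasurable)
          (((hm p).mul (hm p)).aestronglyMeasurable)
    _ = if q = q' then 1 else 0 := by rw [pair_int_eq hm hi hg, zsq_mean hm hg, mul_one]

private lemma core2 (hm : ∀ p, Measurable (z p))
    (hi : iIndepFun z P)
    (hg : ∀ p, P.map (z p) = gaussianReal 0 1)
    (Q : Finset ι) (c : ι → ℝ) :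
    ∫ ω, (∑ q ∈ Q, c q * z q ω) * (∑ q ∈ Q, c q * z q ω) ∂P = ∑ q ∈ Q, (c q)^2 := by
  have heq : (fun ω => (∑ q ∈ Q, c q * z q ω) * (∑ q ∈ Q, c q * z q ω))
      = fun ω => ∑ q ∈ Q, ∑ q' ∈ Q, (c q * c q') * (z q ω * z q' ω) := by
    funext ω
    rw [Finset.sum_mul_sum]
    exact Finset.sum_congr rfl fun q _ => Finset.sum_congr rfl fun q' _ => by ring
  calc ∫ ω, (∑ q ∈ Q, c q * z q ω) * (∑ q ∈ Q, c q * z q ω) ∂P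
      = ∫ ω, ∑ q ∈ Q, ∑ q' ∈ Q, (c q * c q') * (z q ω * z q' ω) ∂P := by rw [heq]
    _ = ∑ q ∈ Q, ∑ q' ∈ Q, ∫ ω, (c q * c q') * (z q ω * z q' ω) ∂P := by
        rw [integral_finset_sum _ fun q hq =>
          integrable_finset_sum _ fun q' hq' => (pair_integrable hm hi hg q q').const_mul _]
        exact Finset.sum_congr rfl fun q hq => integral_finset_sum _ fun q' hq' =>
          (pair_integrable hm hi hg q q').const_mul _
    _ = ∑ q ∈ Q, ∑ q' ∈ Q, (c q * c q') * (if q = q' then 1 else 0) := by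
        exact Finset.sum_congr rfl fun q hq => Finset.sum_congr rfl fun q' hq' => by
          rw [integral_const_mul, pair_int_eq hm hi hg]
    _ = ∑ q ∈ Q, (c q)^2 := by
        refine Finset.sum_congr rfl fun q hq => ?_
        simp only [mul_ite, mul_one, mul_zero]
        rw [Finset.sum_ite_eq, if_pos hq, pow_two]

private lemma core (hm : ∀ p, Measurable (z p))
    (hi : iIndepFun z P)
    (hg : ∀ p, P.map (z p) = gaussianReal 0 1)
    (T : Finset ℕ) (Pf : ℕ → ι) (Q : ℕ → Finset ι) (c : ℕ → ι → ℝ)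
    (hPQ : ∀ t ∈ T, ∀ q ∈ Q t, Pf t ≠ q)
    (hfresh : ∀ t ∈ T, ∀ t' ∈ T, t ≠ t' →
      ((Pf t' ≠ Pf t ∧ (∀ q ∈ Q t, Pf t' ≠ q) ∧ (∀ q ∈ Q t', Pf t' ≠ q)) ∨
       (Pf t ≠ Pf t' ∧ (∀ q ∈ Q t, Pf t ≠ q) ∧ (∀ q ∈ Q t', Pf t ≠ q)))) :
    variance (fun ω => ∑ t ∈ T, ∑ q ∈ Q t, c t q * (z (Pf t) ω * z q ω)) P
      = ∑ t ∈ T, ∑ q ∈ Q t, (c t q)^2 := by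
  classical
  set u : ℕ → Ω → ℝ := fun t ω => ∑ q ∈ Q t, c t q * (z (Pf t) ω * z q ω) with hu
  have hmemu : ∀ t ∈ T, MemLp (u t) 2 P := by
    intro t ht
    have h := memLp_finset_sum' (Q t)
      (f := fun q ω => c t q * (z (Pf t) ω * z q ω))
      (fun q hq => (pair_mem2 hm hi hg (hPQ t ht q hq)).const_mul _)
    rwa [show (∑ q ∈ Q t, fun ω => c t q * (z (Pf t) ω * z q ω)) = u t from
      funext fun ω => by simp [hu]] at h
  have hSmem : MemLp (fun ω => ∑ t ∈ T, u t ω) 2 P := by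
    have h := memLp_finset_sum' T (f := u) hmemu
    rwa [show (∑ t ∈ T, u t) = fun ω => ∑ t ∈ T, u t ω from funext fun ω => by simp] at h
  have hu_int : ∀ t ∈ T, Integrable (u t) P := fun t ht => (hmemu t ht).integrable one_le_two
  have hEu : ∀ t ∈ T, ∫ ω, u t ω ∂P = 0 := by
    intro t ht
    rw [show (fun ω => u t ω) = fun ω => ∑ q ∈ Q t, c t q * (z (Pf t) ω * z q ω) from rfl]
    rw [integral_finset_sum _ fun q hq => (pair_integrable hm hi hg _ _).const_mul _]
    refine Finset.sum_eq_zero fun q hq => ?_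
    rw [integral_const_mul, pair_int hm hi hg _ _ (hPQ t ht q hq), mul_zero]
  have hES : ∫ ω, ∑ t ∈ T, u t ω ∂P = 0 := by
    rw [integral_finset_sum _ hu_int]
    exact Finset.sum_eq_zero hEu
  have huu_eq : ∀ t t', (fun ω => u t ω * u t' ω)
      = fun ω => ∑ q ∈ Q t, ∑ q' ∈ Q t',
          (c t q * c t' q') * ((z (Pf t) ω * z q ω) * (z (Pf t') ω * z q' ω)) := by
    intro t t'
    funext ω
    show (∑ q ∈ Q t, c t q * (z (Pf t) ω * z q ω)) * (∑ q' ∈ Q t', c t' q' * (z (Pf t') ω * z q' ω)) = _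
    rw [Finset.sum_mul_sum]
    exact Finset.sum_congr rfl fun q _ => Finset.sum_congr rfl fun q' _ => by ring
  have huu_int : ∀ t ∈ T, ∀ t' ∈ T, Integrable (fun ω => u t ω * u t' ω) P := by
    intro t ht t' ht'
    rw [huu_eq]
    exact integrable_finset_sum _ fun q hq => integrable_finset_sum _ fun q' hq' =>
      (quad_integrable hm hi hg (hPQ t ht q hq) (hPQ t' ht' q' hq')).const_mul _
  have hEuu : ∀ t ∈ T, ∀ t' ∈ T, ∫ ω, u t ω * u t' ω ∂P
      = if t = t' then ∑ q ∈ Q t, (c t q)^2 else 0 := by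
    intro t ht t' ht'
    rw [huu_eq]
    rw [integral_finset_sum _ fun q hq => integrable_finset_sum _ fun q' hq' =>
      (quad_integrable hm hi hg (hPQ t ht q hq) (hPQ t' ht' q' hq')).const_mul _]
    rw [Finset.sum_congr rfl fun q hq => integral_finset_sum _ fun q' hq' =>
      (quad_integrable hm hi hg (hPQ t ht q hq) (hPQ t' ht' q' hq')).const_mul _]
    by_cases htt : t = t'
    · subst htt
      rw [if_pos rfl]
      refine Finset.sum_congr rfl fun q hq => ?_
      rw [Finset.sum_congr rfl fun q' hq' => by
        rw [integral_const_mul, quad_same hm hi hg (hPQ t ht q hq) (hPQ t ht q' hq')]]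
      simp only [mul_ite, mul_one, mul_zero]
      rw [Finset.sum_ite_eq, if_pos hq, pow_two]
    · rw [if_neg htt]
      refine Finset.sum_eq_zero fun q hq => Finset.sum_eq_zero fun q' hq' => ?_
      rw [integral_const_mul]
      rcases hfresh t ht t' ht' htt with ⟨h1, h2, h3⟩ | ⟨h1, h2, h3⟩
      · rw [quad_lone hm hi hg h1 (h2 q hq) (h3 q' hq'), mul_zero]
      · rw [show (∫ ω, (z (Pf t) ω * z q ω) * (z (Pf t') ω * z q' ω) ∂P)
            = ∫ ω, (z (Pf t') ω * z q' ω) * (z (Pf t) ω * z q ω) ∂P from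
          integral_congr_ae (Eventually.of_forall fun ω => by ring)]
        rw [quad_lone hm hi hg h1 (h3 q' hq') (h2 q hq), mul_zero]
  show variance (fun ω => ∑ t ∈ T, u t ω) P = _
  rw [variance_eq_sub hSmem]
  have e1 : P[fun ω => ∑ t ∈ T, u t ω] = 0 := hES
  rw [e1]
  have hX2 : (fun ω => ∑ t ∈ T, u t ω)^2 = fun ω => ∑ t ∈ T, ∑ t' ∈ T, u t ω * u t' ω := by
    funext ω
    show (∑ t ∈ T, u t ω) ^ 2 = _
    rw [pow_two, Finset.sum_mul_sum]
  rw [hX2]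
  have e2 : P[fun ω => ∑ t ∈ T, ∑ t' ∈ T, u t ω * u t' ω]
      = ∑ t ∈ T, ∑ t' ∈ T, ∫ ω, u t ω * u t' ω ∂P := by
    rw [integral_finset_sum _ fun t ht => integrable_finset_sum _ fun t' ht' =>
      huu_int t ht t' ht']
    exact Finset.sum_congr rfl fun t ht => integral_finset_sum _ fun t' ht' => huu_int t ht t' ht'
  rw [e2]
  have e3 : ∑ t ∈ T, ∑ t' ∈ T, ∫ ω, u t ω * u t' ω ∂P = ∑ t ∈ T, ∑ q ∈ Q t, (c t q)^2 := by
    refine Finset.sum_congr rfl fun t ht => ?_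
    rw [Finset.sum_congr rfl fun t' ht' => hEuu t ht t' ht']
    rw [Finset.sum_ite_eq, if_pos ht]
  rw [e3]
  ring

end IIDFamily

/-- For every `j ≥ 1` and every `n ≥ 1`, the total variance of the sample average
`(1/n) ∑_{t=1}^{n} x_{t+j} yₜᵀ` equals `(N/n²) ∑_{t=1}^{n} Tr[R₀(t)]`, where
`R₀(t) = E[yₜ yₜᵀ]`. -/
theorem total_variance_sample_average_noise_state
    {Ω : Type*} [MeasurableSpace Ω] (P : Measure Ω) [IsProbabilityMeasure P]
    (N : ℕ) (hN : 1 ≤ N) (μ : ℝ) (hμ : μ ∈ Set.Ioo (0 : ℝ) 1)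
    (A : Matrix (Fin N) (Fin N) ℝ) (hA : A.IsSymm)
    (x : ℕ → Ω → Fin N → ℝ)
    (hxmeas : ∀ t k, Measurable (fun ω => x t ω k))
    (hxindep : iIndepFun
      (fun (p : ℕ × Fin N) ω => x p.1 ω p.2) P)
    (hxgauss : ∀ t k, P.map (fun ω => x t ω k) = gaussianReal 0 1)
    (y : ℕ → Ω → Fin N → ℝ)
    (hy0 : ∀ ω, y 0 ω = μ • x 0 ω)
    (hyrec : ∀ t ω, y (t + 1) ω = A.mulVec (y t ω) + μ • x (t + 1) ω)
    (j : ℕ) (hj : 1 ≤ j) (n : ℕ) (hn : 1 ≤ n) :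
    ∑ a : Fin N, ∑ b : Fin N,
        variance (fun ω => (n : ℝ)⁻¹ * ∑ t ∈ Finset.Icc 1 n, x (t + j) ω a * y t ω b) P
      = (N : ℝ) / (n : ℝ) ^ 2
          * ∑ t ∈ Finset.Icc 1 n, ∑ i : Fin N, ∫ ω, y t ω i * y t ω i ∂P := by
  classical
  have hzm : ∀ p : ℕ × Fin N, Measurable ((fun (p : ℕ × Fin N) ω => x p.1 ω p.2) p) :=
    fun p => hxmeas p.1 p.2
  have hzg : ∀ p : ℕ × Fin N,
      P.map ((fun (p : ℕ × Fin N) ω => x p.1 ω p.2) p) = gaussianReal 0 1 :=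
    fun p => hxgauss p.1 p.2
  -- closed form for y
  have hform : ∀ t ω (i : Fin N), y t ω i
      = ∑ s ∈ Finset.range (t+1), ∑ k : Fin N, (μ * (A ^ (t - s)) i k) * x s ω k := by
    intro t
    induction t with
    | zero =>
      intro ω i
      rw [hy0 ω]
      simp [Finset.sum_range_one, Matrix.one_apply, mul_ite, ite_mul, mul_one, mul_zero, zero_mul,
        Finset.sum_ite_eq, Finset.mem_univ]
    | succ t ih =>
      intro ω i
      rw [hyrec t ω]
      have hmv : (A.mulVec (y t ω) + μ • x (t+1) ω) i
          = (∑ k, A i k * y t ω k) + μ * x (t+1) ω i := by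
        simp [Matrix.mulVec, dotProduct]
      rw [hmv]
      have hexp : (∑ k, A i k * y t ω k)
          = ∑ s ∈ Finset.range (t+1), ∑ l : Fin N, (μ * ((A * A ^ (t - s)) i l)) * x s ω l := by
        have hik : ∀ k : Fin N, y t ω k
            = ∑ s ∈ Finset.range (t+1), ∑ l : Fin N, (μ * (A ^ (t - s)) k l) * x s ω l :=
          fun k => ih ω k
        simp_rw [hik, Finset.mul_sum]
        rw [Finset.sum_comm]
        refine Finset.sum_congr rfl fun s hs => ?_
        rw [Finset.sum_comm]
        refine Finset.sum_congr rfl fun l _ => ?_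
        rw [Matrix.mul_apply, Finset.mul_sum, Finset.sum_mul]
        exact Finset.sum_congr rfl fun k _ => by ring
      rw [hexp]
      have h1 : ∑ s ∈ Finset.range (t+1), ∑ l : Fin N, (μ * ((A * A ^ (t - s)) i l)) * x s ω l
          = ∑ s ∈ Finset.range (t+1), ∑ k : Fin N, (μ * (A ^ (t + 1 - s)) i k) * x s ω k := by
        refine Finset.sum_congr rfl fun s hs => Finset.sum_congr rfl fun l _ => ?_
        have hs' : s < t + 1 := Finset.mem_range.1 hs
        have hsub : t + 1 - s = (t - s) + 1 := by omega
        rw [hsub, pow_succ']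
      have h2 : (μ:ℝ) * x (t+1) ω i
          = ∑ k : Fin N, (μ * (A ^ (t + 1 - (t + 1))) i k) * x (t+1) ω k := by
        simp [Nat.sub_self, Matrix.one_apply, mul_ite, ite_mul, mul_one, mul_zero, zero_mul,
          Finset.sum_ite_eq, Finset.mem_univ]
      conv_rhs => rw [Finset.sum_range_succ]
      rw [h1, h2]
  -- per-entry variance via `core`
  have key : ∀ (a b : Fin N),
      variance (fun ω => ∑ t ∈ Finset.Icc 1 n, x (t + j) ω a * y t ω b) P
        = ∑ t ∈ Finset.Icc 1 n,
            ∑ q ∈ Finset.range (t+1) ×ˢ (Finset.univ : Finset (Fin N)),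
              (μ * (A ^ (t - q.1)) b q.2)^2 := by
    intro a b
    have hS : (fun ω => ∑ t ∈ Finset.Icc 1 n, x (t + j) ω a * y t ω b)
        = fun ω => ∑ t ∈ Finset.Icc 1 n,
            ∑ q ∈ Finset.range (t+1) ×ˢ (Finset.univ : Finset (Fin N)),
              (μ * (A ^ (t - q.1)) b q.2) * (x (t + j) ω a * x q.1 ω q.2) := by
      funext ω
      refine Finset.sum_congr rfl fun t ht => ?_
      rw [hform t ω b, Finset.mul_sum, Finset.sum_product]
      refine Finset.sum_congr rfl fun s hs => ?_
      rw [Finset.mul_sum]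
      refine Finset.sum_congr rfl fun k _ => ?_
      show x (t + j) ω a * ((μ * (A ^ (t - s)) b k) * x s ω k)
        = (μ * (A ^ (t - s)) b k) * (x (t + j) ω a * x s ω k)
      ring
    have hPQ : ∀ t ∈ Finset.Icc 1 n,
        ∀ q ∈ Finset.range (t+1) ×ˢ (Finset.univ : Finset (Fin N)),
          ((t + j, a) : ℕ × Fin N) ≠ q := by
      intro t ht q hq h
      have h1 : t + j = q.1 := congrArg Prod.fst h
      have h2 : q.1 < t + 1 := Finset.mem_range.1 (Finset.mem_product.1 hq).1
      omega
    have hfresh : ∀ t ∈ Finset.Icc 1 n, ∀ t' ∈ Finset.Icc 1 n, t ≠ t' →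
        ((((t' + j, a) : ℕ × Fin N) ≠ ((t + j, a) : ℕ × Fin N) ∧
          (∀ q ∈ Finset.range (t+1) ×ˢ (Finset.univ : Finset (Fin N)),
            ((t' + j, a) : ℕ × Fin N) ≠ q) ∧
          (∀ q ∈ Finset.range (t'+1) ×ˢ (Finset.univ : Finset (Fin N)),
            ((t' + j, a) : ℕ × Fin N) ≠ q)) ∨
         (((t + j, a) : ℕ × Fin N) ≠ ((t' + j, a) : ℕ × Fin N) ∧
          (∀ q ∈ Finset.range (t+1) ×ˢ (Finset.univ : Finset (Fin N)),
            ((t + j, a) : ℕ × Fin N) ≠ q) ∧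
          (∀ q ∈ Finset.range (t'+1) ×ˢ (Finset.univ : Finset (Fin N)),
            ((t + j, a) : ℕ × Fin N) ≠ q))) := by
      intro t ht t' ht' htt
      rcases Nat.lt_or_ge t t' with hlt | hge
      · left
        refine ⟨fun h => ?_, fun q hq h => ?_, fun q hq h => ?_⟩
        · have := congrArg Prod.fst h; simp only at this; omega
        · have h1 : t' + j = q.1 := congrArg Prod.fst h
          have h2 : q.1 < t + 1 := Finset.mem_range.1 (Finset.mem_product.1 hq).1
          omega
        · have h1 : t' + j = q.1 := congrArg Prod.fst h
          have h2 : q.1 < t' + 1 := Finset.mem_range.1 (Finset.mem_product.1 hq).1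
          omega
      · have hlt : t' < t := by omega
        right
        refine ⟨fun h => ?_, fun q hq h => ?_, fun q hq h => ?_⟩
        · have := congrArg Prod.fst h; simp only at this; omega
        · have h1 : t + j = q.1 := congrArg Prod.fst h
          have h2 : q.1 < t + 1 := Finset.mem_range.1 (Finset.mem_product.1 hq).1
          omega
        · have h1 : t + j = q.1 := congrArg Prod.fst h
          have h2 : q.1 < t' + 1 := Finset.mem_range.1 (Finset.mem_product.1 hq).1
          omega
    rw [hS]
    exact core (z := fun (p : ℕ × Fin N) ω => x p.1 ω p.2) hzm hxindep hzg
      (Finset.Icc 1 n) (fun t => (t + j, a))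
      (fun t => Finset.range (t+1) ×ˢ (Finset.univ : Finset (Fin N)))
      (fun t q => μ * (A ^ (t - q.1)) b q.2) hPQ hfresh
  -- second moments of y via `core2`
  have hRHS : ∀ t ∈ Finset.Icc 1 n, ∀ i : Fin N, ∫ ω, y t ω i * y t ω i ∂P
      = ∑ q ∈ Finset.range (t+1) ×ˢ (Finset.univ : Finset (Fin N)),
          (μ * (A ^ (t - q.1)) i q.2)^2 := by
    intro t ht i
    have hyP : ∀ ω, y t ω i
        = ∑ q ∈ Finset.range (t+1) ×ˢ (Finset.univ : Finset (Fin N)),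
            (μ * (A ^ (t - q.1)) i q.2) * x q.1 ω q.2 := by
      intro ω
      rw [Finset.sum_product]
      exact hform t ω i
    have hy2 : (fun ω => y t ω i * y t ω i)
        = fun ω => (∑ q ∈ Finset.range (t+1) ×ˢ (Finset.univ : Finset (Fin N)),
              (μ * (A ^ (t - q.1)) i q.2) * x q.1 ω q.2)
            * (∑ q ∈ Finset.range (t+1) ×ˢ (Finset.univ : Finset (Fin N)),
              (μ * (A ^ (t - q.1)) i q.2) * x q.1 ω q.2) := by
      funext ω; rw [hyP ω]
    rw [hy2]
    exact core2 (z := fun (p : ℕ × Fin N) ω => x p.1 ω p.2) hzm hxindep hzg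
      (Finset.range (t+1) ×ˢ (Finset.univ : Finset (Fin N)))
      (fun q => μ * (A ^ (t - q.1)) i q.2)
  -- assemble
  have hL : ∑ a : Fin N, ∑ b : Fin N,
      variance (fun ω => (n : ℝ)⁻¹ * ∑ t ∈ Finset.Icc 1 n, x (t + j) ω a * y t ω b) P
      = ∑ a : Fin N, ∑ b : Fin N, ((n : ℝ)⁻¹)^2 *
          ∑ t ∈ Finset.Icc 1 n,
            ∑ q ∈ Finset.range (t+1) ×ˢ (Finset.univ : Finset (Fin N)),
              (μ * (A ^ (t - q.1)) b q.2)^2 := by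
    refine Finset.sum_congr rfl fun a _ => Finset.sum_congr rfl fun b _ => ?_
    rw [variance_const_mul, key a b]
  rw [hL]
  have hR : ∑ t ∈ Finset.Icc 1 n, ∑ i : Fin N, ∫ ω, y t ω i * y t ω i ∂P
      = ∑ t ∈ Finset.Icc 1 n, ∑ i : Fin N,
          ∑ q ∈ Finset.range (t+1) ×ˢ (Finset.univ : Finset (Fin N)),
            (μ * (A ^ (t - q.1)) i q.2)^2 :=
    Finset.sum_congr rfl fun t ht => Finset.sum_congr rfl fun i _ => hRHS t ht i
  rw [hR]
  have hswap : ∀ a : Fin N, ∑ b : Fin N, ((n : ℝ)⁻¹)^2 *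
      ∑ t ∈ Finset.Icc 1 n,
        ∑ q ∈ Finset.range (t+1) ×ˢ (Finset.univ : Finset (Fin N)),
          (μ * (A ^ (t - q.1)) b q.2)^2
      = ((n : ℝ)⁻¹)^2 * ∑ t ∈ Finset.Icc 1 n, ∑ i : Fin N,
          ∑ q ∈ Finset.range (t+1) ×ˢ (Finset.univ : Finset (Fin N)),
            (μ * (A ^ (t - q.1)) i q.2)^2 := by
    intro a
    rw [← Finset.mul_sum, Finset.sum_comm]
  rw [Finset.sum_congr rfl fun a _ => hswap a, Finset.sum_const, Finset.card_univ,
    Fintype.card_fin, nsmul_eq_mul]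
  have hn0 : (n:ℝ) ≠ 0 := Nat.cast_ne_zero.mpr (by omega)
  field_simp
end

section
/- For all times j > t ≥ 0 and all indices a, b, c, d in {1,…,N}: Cov((y_j y_jᵀ)_{ab}, (y_t y_tᵀ)_{cd}) = Σ_{p,q=1}^N (A^{j−t})_{ap} (A^{j−t})_{bq} [ R_0(t)_{pc} R_0(t)_{qd} + R_0(t)_{pd} R_0(t)_{qc} ], where R_0(t) := E[y_t y_tᵀ]; in Kronecker-product form, Cov(vec(y_j y_jᵀ), vec(y_t y_tᵀ)) = 2 (A^{j−t} ⊗ A^{j−t})(R_0(t) ⊗ R_0(t)) after symmetrization. -/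
open MeasureTheory ProbabilityTheory Real
open scoped NNReal ENNReal

set_option maxHeartbeats 1000000
set_option linter.unusedSectionVars false
set_option linter.unusedVariables false

namespace CovWick


noncomputable def mom (n : ℕ) : ℝ := ∫ x, x ^ n ∂(gaussianReal 0 1)

lemma integrable_pow_exp (n : ℕ) :
    Integrable (fun x : ℝ => x ^ n * Real.exp (-(1/2) * x ^ 2)) := by
  have hs : (-1 : ℝ) < (n : ℝ) := by
    have : (0:ℝ) ≤ n := Nat.cast_nonneg n
    linarith
  have := integrable_rpow_mul_exp_neg_mul_sq (b := 1/2) (by norm_num) hs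
  simpa [Real.rpow_natCast] using this

lemma gaussianPDFReal_std (x : ℝ) :
    gaussianPDFReal 0 1 x = (Real.sqrt (2 * π))⁻¹ * Real.exp (-(1/2) * x ^ 2) := by
  simp only [gaussianPDFReal, NNReal.coe_one, mul_one, sub_zero]
  congr 1
  ring_nf

lemma gaussianPDF_std_eq :
    gaussianPDF 0 1 = fun x => ((Real.toNNReal (gaussianPDFReal 0 1 x) : ℝ≥0) : ℝ≥0∞) := rfl

lemma integral_gaussianReal_std (f : ℝ → ℝ) :
    ∫ x, f x ∂(gaussianReal 0 1) = ∫ x, gaussianPDFReal 0 1 x * f x := by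
  rw [gaussianReal_of_var_ne_zero 0 one_ne_zero, gaussianPDF_std_eq,
    integral_withDensity_eq_integral_smul
      ((measurable_gaussianPDFReal 0 1).real_toNNReal) f]
  refine integral_congr_ae (Filter.Eventually.of_forall fun x => ?_)
  simp [NNReal.smul_def, Real.coe_toNNReal _ (gaussianPDFReal_nonneg 0 1 x)]

lemma integrable_gaussianReal_iff {f : ℝ → ℝ} :
    Integrable f (gaussianReal 0 1) ↔
      Integrable (fun x => gaussianPDFReal 0 1 x * f x) := by
  rw [gaussianReal_of_var_ne_zero 0 one_ne_zero, gaussianPDF_std_eq,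
    integrable_withDensity_iff_integrable_smul
      ((measurable_gaussianPDFReal 0 1).real_toNNReal)]
  constructor <;> intro h <;> refine h.congr (Filter.Eventually.of_forall fun x => ?_) <;>
    simp [NNReal.smul_def, Real.coe_toNNReal _ (gaussianPDFReal_nonneg 0 1 x)]

lemma integrable_pow_gaussianReal (n : ℕ) :
    Integrable (fun x : ℝ => x ^ n) (gaussianReal 0 1) := by
  rw [integrable_gaussianReal_iff]
  refine ((integrable_pow_exp n).const_mul ((Real.sqrt (2 * π))⁻¹)).congr
    (Filter.Eventually.of_forall fun x => ?_)
  simp only [gaussianPDFReal_std]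
  ring




lemma integral_odd (f : ℝ → ℝ) (hf : ∀ x, f (-x) = - f x) : ∫ x, f x = 0 := by
  have h := integral_neg_eq_self f (volume : Measure ℝ)
  simp_rw [hf, integral_neg] at h
  linarith

lemma integral_odd_pow (n : ℕ) (hn : Odd n) :
    ∫ x : ℝ, x ^ n * Real.exp (-(1/2) * x ^ 2) = 0 := by
  refine integral_odd _ fun x => ?_
  rw [hn.neg_pow, neg_sq]
  ring

lemma integral_even_pow (n : ℕ) (hn : Even n) :
    ∫ x : ℝ, x ^ n * Real.exp (-(1/2) * x ^ 2)
      = 2 * (((1:ℝ)/2) ^ (-((n:ℝ) + 1) / 2) * (1 / 2) * Real.Gamma (((n:ℝ) + 1) / 2)) := by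
  have h1 : ∀ x : ℝ, (fun y : ℝ => y ^ n * Real.exp (-(1/2) * y ^ 2)) |x|
      = x ^ n * Real.exp (-(1/2) * x ^ 2) := by
    intro x
    simp only [hn.pow_abs, sq_abs]
  calc ∫ x : ℝ, x ^ n * Real.exp (-(1/2) * x ^ 2)
      = ∫ x : ℝ, (fun y : ℝ => y ^ n * Real.exp (-(1/2) * y ^ 2)) |x| := by
        exact (integral_congr_ae (Filter.Eventually.of_forall fun x => (h1 x).symm))
    _ = 2 * ∫ x in Set.Ioi (0:ℝ), x ^ n * Real.exp (-(1/2) * x ^ 2) := by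
        exact integral_comp_abs (f := fun y : ℝ => y ^ n * Real.exp (-(1/2) * y ^ 2))
    _ = 2 * ∫ x in Set.Ioi (0:ℝ), x ^ (n:ℝ) * Real.exp (-(1/2) * x ^ (2:ℝ)) := by
        congr 1
        refine setIntegral_congr_fun measurableSet_Ioi fun x _ => ?_
        rw [show x ^ (n:ℝ) = x ^ n from Real.rpow_natCast x n,
          show x ^ (2:ℝ) = x ^ 2 by rw [← Real.rpow_natCast x 2]; norm_num]
    _ = 2 * (((1:ℝ)/2) ^ (-((n:ℝ) + 1) / 2) * (1 / 2) * Real.Gamma (((n:ℝ) + 1) / 2)) := by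
        rw [integral_rpow_mul_exp_neg_mul_rpow (by norm_num)
          (by have : (0:ℝ) ≤ n := Nat.cast_nonneg n; linarith) (by norm_num)]

lemma integral_exp_std : ∫ x : ℝ, Real.exp (-(1/2) * x ^ 2) = Real.sqrt (2 * π) := by
  have := integral_gaussian (1/2)
  rw [show (π / (1/2) : ℝ) = 2 * π by ring] at this
  simpa using this

lemma two_rpow_aux (r : ℝ) : ((1:ℝ)/2) ^ (-r) = (2:ℝ) ^ r := by
  rw [show ((1:ℝ)/2) = (2:ℝ)⁻¹ by norm_num, ← Real.rpow_neg_one,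
    ← Real.rpow_mul (by norm_num)]
  norm_num

lemma integral_pow2_exp : ∫ x : ℝ, x ^ 2 * Real.exp (-(1/2) * x ^ 2) = Real.sqrt (2 * π) := by
  rw [integral_even_pow 2 (by norm_num)]
  have hG : Real.Gamma ((((2:ℕ):ℝ) + 1) / 2) = (1/2) * Real.sqrt π := by
    rw [show ((((2:ℕ):ℝ) + 1) / 2) = 1/2 + 1 by norm_num,
      Real.Gamma_add_one (by norm_num), Real.Gamma_one_half_eq]
  have hr : ((1:ℝ)/2) ^ (-(((2:ℕ):ℝ) + 1) / 2) = 2 * Real.sqrt 2 := by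
    rw [show (-(((2:ℕ):ℝ) + 1) / 2) = -(3/2 : ℝ) by norm_num, two_rpow_aux,
      show (3/2 : ℝ) = 1 + 1/2 by norm_num, Real.rpow_add (by norm_num),
      Real.rpow_one, ← Real.sqrt_eq_rpow]
  rw [hG, hr, Real.sqrt_mul (by norm_num) π]
  ring

lemma integral_pow4_exp : ∫ x : ℝ, x ^ 4 * Real.exp (-(1/2) * x ^ 2) = 3 * Real.sqrt (2 * π) := by
  rw [integral_even_pow 4 ⟨2, rfl⟩]
  have hG : Real.Gamma ((((4:ℕ):ℝ) + 1) / 2) = (3/4) * Real.sqrt π := by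
    rw [show ((((4:ℕ):ℝ) + 1) / 2) = 3/2 + 1 by norm_num,
      Real.Gamma_add_one (by norm_num),
      show (3/2 : ℝ) = 1/2 + 1 by norm_num,
      Real.Gamma_add_one (by norm_num), Real.Gamma_one_half_eq]
    ring
  have hr : ((1:ℝ)/2) ^ (-(((4:ℕ):ℝ) + 1) / 2) = 4 * Real.sqrt 2 := by
    rw [show (-(((4:ℕ):ℝ) + 1) / 2) = -(5/2 : ℝ) by norm_num, two_rpow_aux,
      show (5/2 : ℝ) = 2 + 1/2 by norm_num, Real.rpow_add (by norm_num),
      ← Real.sqrt_eq_rpow, show ((2:ℝ) ^ (2:ℝ)) = 4 by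
        rw [show (2:ℝ) = ((2:ℕ):ℝ) from by norm_num, Real.rpow_natCast]
        norm_num]
  rw [hG, hr, Real.sqrt_mul (by norm_num) π]
  ring


lemma mom_eq (n : ℕ) :
    mom n = (Real.sqrt (2 * π))⁻¹ * ∫ x : ℝ, x ^ n * Real.exp (-(1/2) * x ^ 2) := by
  rw [mom, integral_gaussianReal_std, ← integral_const_mul]
  exact integral_congr_ae (Filter.Eventually.of_forall fun x => by
    simp only [gaussianPDFReal_std]; ring)

lemma sqrt_two_pi_ne : Real.sqrt (2 * π) ≠ 0 :=
  ne_of_gt (Real.sqrt_pos.2 (by positivity))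

lemma mom_one : mom 1 = 0 := by rw [mom_eq, integral_odd_pow 1 ⟨0, rfl⟩]; ring
lemma mom_three : mom 3 = 0 := by rw [mom_eq, integral_odd_pow 3 ⟨1, rfl⟩]; ring
lemma mom_two : mom 2 = 1 := by
  rw [mom_eq, integral_pow2_exp, inv_mul_cancel₀ sqrt_two_pi_ne]
lemma mom_four : mom 4 = 3 := by
  rw [mom_eq, integral_pow4_exp, mul_comm (3:ℝ), ← mul_assoc,
    inv_mul_cancel₀ sqrt_two_pi_ne, one_mul]

variable {Ω : Type*} [MeasurableSpace Ω] {P : Measure Ω}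

lemma integrable_pow_rv {g : Ω → ℝ} (hm : Measurable g)
    (hg : P.map g = gaussianReal 0 1) (n : ℕ) :
    Integrable (fun ω => (g ω) ^ n) P := by
  have h : Integrable (fun x : ℝ => x ^ n) (P.map g) := by
    rw [hg]; exact integrable_pow_gaussianReal n
  exact (integrable_map_measure (f := g) (g := fun x : ℝ => x ^ n)
    (by fun_prop) hm.aemeasurable).mp h

lemma integral_pow_rv {g : Ω → ℝ} (hm : Measurable g)
    (hg : P.map g = gaussianReal 0 1) (n : ℕ) :
    ∫ ω, (g ω) ^ n ∂P = mom n := by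
  have h := integral_map (μ := P) (φ := g) hm.aemeasurable (f := fun x : ℝ => x ^ n)
    (by fun_prop)
  rw [hg] at h
  rw [mom, ← h]

/-- Kronecker delta. -/
def D {ι : Type*} [DecidableEq ι] (i j : ι) : ℝ := if i = j then 1 else 0

section SumAlgebra
variable {ι : Type*} [DecidableEq ι]

lemma sum_delta_pair (F : Finset ι) (u v : ι → ℝ) :
    ∑ p ∈ F, ∑ q ∈ F, u p * v q * D p q = ∑ p ∈ F, u p * v p := by
  refine Finset.sum_congr rfl fun p hp => ?_
  simp [D, mul_ite, mul_one, mul_zero, Finset.sum_ite_eq, hp]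

lemma sum4_factor (F : Finset ι) (X Y : ι → ι → ℝ) :
    ∑ p1 ∈ F, ∑ p2 ∈ F, ∑ p3 ∈ F, ∑ p4 ∈ F, X p1 p2 * Y p3 p4
      = (∑ p ∈ F, ∑ q ∈ F, X p q) * (∑ p ∈ F, ∑ q ∈ F, Y p q) := by
  calc ∑ p1 ∈ F, ∑ p2 ∈ F, ∑ p3 ∈ F, ∑ p4 ∈ F, X p1 p2 * Y p3 p4
      = ∑ p1 ∈ F, ∑ p2 ∈ F, X p1 p2 * (∑ p3 ∈ F, ∑ q ∈ F, Y p3 q) := by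
        refine Finset.sum_congr rfl fun p1 _ => Finset.sum_congr rfl fun p2 _ => ?_
        simp only [Finset.mul_sum]
    _ = (∑ p ∈ F, ∑ q ∈ F, X p q) * (∑ p ∈ F, ∑ q ∈ F, Y p q) := by
        simp only [Finset.sum_mul]

lemma sum4_factor' (F : Finset ι) (X Y : ι → ι → ℝ) :
    ∑ p1 ∈ F, ∑ p2 ∈ F, ∑ p3 ∈ F, ∑ p4 ∈ F, X p1 p3 * Y p2 p4
      = (∑ p ∈ F, ∑ q ∈ F, X p q) * (∑ p ∈ F, ∑ q ∈ F, Y p q) := by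
  refine Eq.trans (Finset.sum_congr rfl fun p1 _ => ?_) (sum4_factor F X Y)
  exact Finset.sum_comm

lemma sum4_factor'' (F : Finset ι) (X Y : ι → ι → ℝ) :
    ∑ p1 ∈ F, ∑ p2 ∈ F, ∑ p3 ∈ F, ∑ p4 ∈ F, X p1 p4 * Y p2 p3
      = (∑ p ∈ F, ∑ q ∈ F, X p q) * (∑ p ∈ F, ∑ q ∈ F, Y p q) := by
  refine Eq.trans (Finset.sum_congr rfl fun p1 _ => ?_) (sum4_factor F X Y)
  calc ∑ p2 ∈ F, ∑ p3 ∈ F, ∑ p4 ∈ F, X p1 p4 * Y p2 p3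
      = ∑ p2 ∈ F, ∑ p4 ∈ F, ∑ p3 ∈ F, X p1 p4 * Y p2 p3 :=
        Finset.sum_congr rfl fun p2 _ => Finset.sum_comm
    _ = ∑ p4 ∈ F, ∑ p2 ∈ F, ∑ p3 ∈ F, X p1 p4 * Y p2 p3 := Finset.sum_comm

end SumAlgebra

section Wick

variable {Ω : Type*} [MeasurableSpace Ω] (P : Measure Ω) [IsProbabilityMeasure P]
  {ι : Type*} [DecidableEq ι] (g : ι → Ω → ℝ)
  (hmeas : ∀ i, Measurable (g i))
  (hindep : iIndepFun g P)
  (hgauss : ∀ i, P.map (g i) = gaussianReal 0 1)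

include hmeas hindep hgauss

lemma wickW (e : ι → ℕ) (s : Finset ι) :
    Integrable (fun ω => ∏ i ∈ s, (g i ω) ^ (e i)) P ∧
    ∫ ω, ∏ i ∈ s, (g i ω) ^ (e i) ∂P = ∏ i ∈ s, mom (e i) := by
  classical
  induction s using Finset.induction_on with
  | empty => simp
  | @insert i s hi ih =>
    have hX : Integrable (fun ω => (g i ω) ^ (e i)) P :=
      integrable_pow_rv (hmeas i) (hgauss i) (e i)
    have hfam : iIndepFun
        (fun j => (fun z : ℝ => z ^ (e j)) ∘ g j) P :=
      hindep.comp _ (fun j => measurable_id.pow_const (e j))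
    have hind : IndepFun (∏ j ∈ s, (fun z : ℝ => z ^ (e j)) ∘ g j)
        ((fun z : ℝ => z ^ (e i)) ∘ g i) P :=
      hfam.indepFun_finsetProd_of_notMem
        (fun j => (hmeas j).pow_const (e j)) hi
    have hprodeq : (∏ j ∈ s, (fun z : ℝ => z ^ (e j)) ∘ g j)
        = fun ω => ∏ j ∈ s, (g j ω) ^ (e j) := by
      funext ω
      simp [Function.comp]
    rw [hprodeq] at hind
    have hind' : IndepFun (fun ω => (g i ω) ^ (e i))
        (fun ω => ∏ j ∈ s, (g j ω) ^ (e j)) P := hind.symm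
    have hfuneq : (fun ω => ∏ j ∈ insert i s, (g j ω) ^ (e j))
        = (fun ω => (g i ω) ^ (e i)) * (fun ω => ∏ j ∈ s, (g j ω) ^ (e j)) := by
      funext ω
      simp [Finset.prod_insert hi]
    constructor
    · rw [hfuneq]
      exact hind'.integrable_mul hX ih.1
    · rw [hfuneq, hind'.integral_mul_eq_mul_integral hX.aestronglyMeasurable ih.1.aestronglyMeasurable,
        integral_pow_rv (hmeas i) (hgauss i), ih.2, Finset.prod_insert hi]

omit hindep in
lemma wick1 (i : ι) (n : ℕ) : ∫ ω, (g i ω) ^ n ∂P = mom n :=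
  integral_pow_rv (hmeas i) (hgauss i) n

lemma wick2pow {i j : ι} (hij : i ≠ j) (n m : ℕ) :
    ∫ ω, (g i ω) ^ n * (g j ω) ^ m ∂P = mom n * mom m := by
  have h := (wickW P g hmeas hindep hgauss (fun r => if r = i then n else m) {i, j}).2
  have hji : j ≠ i := hij.symm
  simpa [Finset.prod_pair hij, hji] using h

lemma wick3pow {i j k : ι} (hij : i ≠ j) (hik : i ≠ k) (hjk : j ≠ k) (n m p : ℕ) :
    ∫ ω, (g i ω) ^ n * (g j ω) ^ m * (g k ω) ^ p ∂P = mom n * mom m * mom p := by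
  have h := (wickW P g hmeas hindep hgauss
    (fun r => if r = i then n else if r = j then m else p) {i, j, k}).2
  have hji : j ≠ i := hij.symm
  have hki : k ≠ i := hik.symm
  have hkj : k ≠ j := hjk.symm
  have hmem : i ∉ ({j, k} : Finset ι) := by simp [hij, hik]
  have hmem2 : j ∉ ({k} : Finset ι) := by simp [hjk]
  simp only [Finset.prod_insert hmem, Finset.prod_insert hmem2,
    Finset.prod_singleton] at h
  simpa [hji, hki, hkj, mul_assoc] using h

lemma wick4pow {i j k l : ι} (hij : i ≠ j) (hik : i ≠ k) (hil : i ≠ l)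
    (hjk : j ≠ k) (hjl : j ≠ l) (hkl : k ≠ l) :
    ∫ ω, g i ω * g j ω * g k ω * g l ω ∂P = mom 1 * mom 1 * mom 1 * mom 1 := by
  have h := (wickW P g hmeas hindep hgauss (fun _ => 1) {i, j, k, l}).2
  have hmem : i ∉ ({j, k, l} : Finset ι) := by simp [hij, hik, hil]
  have hmem2 : j ∉ ({k, l} : Finset ι) := by simp [hjk, hjl]
  have hmem3 : k ∉ ({l} : Finset ι) := by simp [hkl]
  simp only [Finset.prod_insert hmem, Finset.prod_insert hmem2,
    Finset.prod_insert hmem3, Finset.prod_singleton] at h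
  simpa [mul_assoc] using h


omit hindep in
lemma integrable_prod2 (i j : ι) :
    Integrable (fun ω => g i ω * g j ω) P := by
  have h2 : ∀ m, Integrable (fun ω => (g m ω) ^ 2) P := fun m =>
    integrable_pow_rv (hmeas m) (hgauss m) 2
  refine Integrable.mono' ((h2 i).add (h2 j))
    ((hmeas i).mul (hmeas j)).aestronglyMeasurable
    (Filter.Eventually.of_forall fun ω => ?_)
  rw [Real.norm_eq_abs]
  simp only [Pi.add_apply]
  rw [abs_le]
  constructor <;> nlinarith [sq_nonneg (g i ω - g j ω), sq_nonneg (g i ω + g j ω)]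

omit hindep in
lemma integrable_prod4 (i j k l : ι) :
    Integrable (fun ω => g i ω * g j ω * g k ω * g l ω) P := by
  have h4 : ∀ m, Integrable (fun ω => (g m ω) ^ 4) P := fun m =>
    integrable_pow_rv (hmeas m) (hgauss m) 4
  refine Integrable.mono' ((h4 i).add ((h4 j).add ((h4 k).add (h4 l))))
    ((((hmeas i).mul (hmeas j)).mul (hmeas k)).mul (hmeas l)).aestronglyMeasurable
    (Filter.Eventually.of_forall fun ω => ?_)
  rw [Real.norm_eq_abs]
  set a := g i ω
  set b := g j ω
  set c := g k ω
  set d := g l ω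
  simp only [Pi.add_apply]
  rw [abs_le]
  constructor <;>
    nlinarith [sq_nonneg (a*b - c*d), sq_nonneg (a*b + c*d), sq_nonneg (a^2 - b^2),
      sq_nonneg (c^2 - d^2), sq_nonneg (a^2 + b^2), sq_nonneg (c^2 + d^2),
      sq_nonneg a, sq_nonneg b, sq_nonneg c, sq_nonneg d]

lemma m2 (i j : ι) : ∫ ω, g i ω * g j ω ∂P = D i j := by
  by_cases hij : i = j
  · subst hij
    rw [show (fun ω => g i ω * g i ω) = fun ω => (g i ω) ^ 2 from
      funext fun ω => by ring, wick1 P g hmeas hgauss i 2, mom_two]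
    simp [D]
  · rw [show (fun ω => g i ω * g j ω) = fun ω => (g i ω) ^ 1 * (g j ω) ^ 1 from
      funext fun ω => by ring, wick2pow P g hmeas hindep hgauss hij 1 1, mom_one]
    simp [D, hij]

lemma m4 (i j k l : ι) :
    ∫ ω, g i ω * g j ω * g k ω * g l ω ∂P
      = D i j * D k l + D i k * D j l + D i l * D j k := by
  by_cases hij : i = j
  · subst hij
    by_cases hik : i = k
    · subst hik
      by_cases hil : i = l
      · subst hil
        rw [show (fun ω => g i ω * g i ω * g i ω * g i ω) = fun ω => (g i ω) ^ 4 from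
          funext fun ω => by ring, wick1 P g hmeas hgauss i 4, mom_four]
        simp [D]
        norm_num
      · rw [show (fun ω => g i ω * g i ω * g i ω * g l ω)
            = fun ω => (g i ω) ^ 3 * (g l ω) ^ 1 from funext fun ω => by ring,
          wick2pow P g hmeas hindep hgauss hil 3 1, mom_three]
        simp [D, hil]
    · by_cases hil : i = l
      · subst hil
        rw [show (fun ω => g i ω * g i ω * g k ω * g i ω)
            = fun ω => (g i ω) ^ 3 * (g k ω) ^ 1 from funext fun ω => by ring,
          wick2pow P g hmeas hindep hgauss hik 3 1, mom_three]
        simp [D, hik, Ne.symm hik]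
      · by_cases hkl : k = l
        · subst hkl
          rw [show (fun ω => g i ω * g i ω * g k ω * g k ω)
              = fun ω => (g i ω) ^ 2 * (g k ω) ^ 2 from funext fun ω => by ring,
            wick2pow P g hmeas hindep hgauss hik 2 2, mom_two]
          simp [D, hik]
        · rw [show (fun ω => g i ω * g i ω * g k ω * g l ω)
              = fun ω => (g i ω) ^ 2 * (g k ω) ^ 1 * (g l ω) ^ 1 from
              funext fun ω => by ring,
            wick3pow P g hmeas hindep hgauss hik hil hkl 2 1 1, mom_one]
          simp [D, hik, hil, hkl]
  · by_cases hik : i = k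
    · subst hik
      by_cases hjl : j = l
      · subst hjl
        rw [show (fun ω => g i ω * g j ω * g i ω * g j ω)
            = fun ω => (g i ω) ^ 2 * (g j ω) ^ 2 from funext fun ω => by ring,
          wick2pow P g hmeas hindep hgauss hij 2 2, mom_two]
        simp [D, hij, Ne.symm hij]
      · by_cases hil : i = l
        · subst hil
          rw [show (fun ω => g i ω * g j ω * g i ω * g i ω)
              = fun ω => (g i ω) ^ 3 * (g j ω) ^ 1 from funext fun ω => by ring,
            wick2pow P g hmeas hindep hgauss hij 3 1, mom_three]
          simp [D, hij, Ne.symm hij]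
        · rw [show (fun ω => g i ω * g j ω * g i ω * g l ω)
              = fun ω => (g i ω) ^ 2 * (g j ω) ^ 1 * (g l ω) ^ 1 from
              funext fun ω => by ring,
            wick3pow P g hmeas hindep hgauss hij hil hjl 2 1 1, mom_one]
          simp [D, hij, Ne.symm hij, hil, hjl]
    · by_cases hil : i = l
      · subst hil
        by_cases hjk : j = k
        · subst hjk
          rw [show (fun ω => g i ω * g j ω * g j ω * g i ω)
              = fun ω => (g i ω) ^ 2 * (g j ω) ^ 2 from funext fun ω => by ring,
            wick2pow P g hmeas hindep hgauss hij 2 2, mom_two]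
          simp [D, hij, Ne.symm hij]
        · rw [show (fun ω => g i ω * g j ω * g k ω * g i ω)
              = fun ω => (g i ω) ^ 2 * (g j ω) ^ 1 * (g k ω) ^ 1 from
              funext fun ω => by ring,
            wick3pow P g hmeas hindep hgauss hij hik hjk 2 1 1, mom_one]
          simp [D, hij, Ne.symm hij, hik, Ne.symm hik, hjk]
      · by_cases hjk : j = k
        · subst hjk
          by_cases hjl : j = l
          · subst hjl
            rw [show (fun ω => g i ω * g j ω * g j ω * g j ω)
                = fun ω => (g i ω) ^ 1 * (g j ω) ^ 3 from funext fun ω => by ring,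
              wick2pow P g hmeas hindep hgauss hij 1 3, mom_one]
            simp [D, hij]
          · rw [show (fun ω => g i ω * g j ω * g j ω * g l ω)
                = fun ω => (g i ω) ^ 1 * (g j ω) ^ 2 * (g l ω) ^ 1 from
                funext fun ω => by ring,
              wick3pow P g hmeas hindep hgauss hij hil hjl 1 2 1, mom_one]
            simp [D, hij, hil, hjl]
        · by_cases hjl : j = l
          · subst hjl
            rw [show (fun ω => g i ω * g j ω * g k ω * g j ω)
                = fun ω => (g i ω) ^ 1 * (g j ω) ^ 2 * (g k ω) ^ 1 from
                funext fun ω => by ring,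
              wick3pow P g hmeas hindep hgauss hij hik hjk 1 2 1, mom_one]
            simp [D, hij, hik, hjk, Ne.symm hjk]
          · by_cases hkl : k = l
            · subst hkl
              rw [show (fun ω => g i ω * g j ω * g k ω * g k ω)
                  = fun ω => (g i ω) ^ 1 * (g j ω) ^ 1 * (g k ω) ^ 2 from
                  funext fun ω => by ring,
                wick3pow P g hmeas hindep hgauss hij hik hjk 1 1 2, mom_one]
              simp [D, hij, hik, hjk]
            · rw [wick4pow P g hmeas hindep hgauss hij hik hil hjk hjl hkl, mom_one]
              simp [D, hij, hik, hil, hjk, hjl, hkl]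


lemma exp2 (F : Finset ι) (c1 c2 : ι → ℝ) :
    ∫ ω, (∑ p ∈ F, c1 p * g p ω) * (∑ p ∈ F, c2 p * g p ω) ∂P
      = ∑ p ∈ F, c1 p * c2 p := by
  have hint : ∀ p q : ι, Integrable (fun ω => c1 p * c2 q * (g p ω * g q ω)) P :=
    fun p q => (integrable_prod2 P g hmeas hgauss p q).const_mul _
  calc ∫ ω, (∑ p ∈ F, c1 p * g p ω) * (∑ p ∈ F, c2 p * g p ω) ∂P
      = ∫ ω, ∑ p ∈ F, ∑ q ∈ F, c1 p * c2 q * (g p ω * g q ω) ∂P := by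
        refine integral_congr_ae (Filter.Eventually.of_forall fun ω => ?_)
        beta_reduce
        rw [Finset.sum_mul_sum]
        exact Finset.sum_congr rfl fun p _ => Finset.sum_congr rfl fun q _ => by ring
    _ = ∑ p ∈ F, ∑ q ∈ F, ∫ ω, c1 p * c2 q * (g p ω * g q ω) ∂P := by
        rw [integral_finset_sum F (fun p _ => integrable_finset_sum F (fun q _ => hint p q))]
        exact Finset.sum_congr rfl fun p _ => integral_finset_sum F (fun q _ => hint p q)
    _ = ∑ p ∈ F, ∑ q ∈ F, c1 p * c2 q * D p q := by
        refine Finset.sum_congr rfl fun p _ => Finset.sum_congr rfl fun q _ => ?_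
        rw [integral_const_mul, m2 P g hmeas hindep hgauss p q]
    _ = ∑ p ∈ F, c1 p * c2 p := sum_delta_pair F c1 c2

lemma exp4 (F : Finset ι) (c1 c2 c3 c4 : ι → ℝ) :
    ∫ ω, ((∑ p ∈ F, c1 p * g p ω) * (∑ p ∈ F, c2 p * g p ω))
        * ((∑ p ∈ F, c3 p * g p ω) * (∑ p ∈ F, c4 p * g p ω)) ∂P
      = (∑ p ∈ F, c1 p * c2 p) * (∑ p ∈ F, c3 p * c4 p)
        + (∑ p ∈ F, c1 p * c3 p) * (∑ p ∈ F, c2 p * c4 p)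
        + (∑ p ∈ F, c1 p * c4 p) * (∑ p ∈ F, c2 p * c3 p) := by
  have hint : ∀ p1 p2 p3 p4 : ι, Integrable
      (fun ω => c1 p1 * c2 p2 * c3 p3 * c4 p4 * (g p1 ω * g p2 ω * g p3 ω * g p4 ω)) P :=
    fun p1 p2 p3 p4 => (integrable_prod4 P g hmeas hgauss p1 p2 p3 p4).const_mul _
  calc ∫ ω, ((∑ p ∈ F, c1 p * g p ω) * (∑ p ∈ F, c2 p * g p ω))
        * ((∑ p ∈ F, c3 p * g p ω) * (∑ p ∈ F, c4 p * g p ω)) ∂P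
      = ∫ ω, ∑ p1 ∈ F, ∑ p2 ∈ F, ∑ p3 ∈ F, ∑ p4 ∈ F,
          c1 p1 * c2 p2 * c3 p3 * c4 p4 * (g p1 ω * g p2 ω * g p3 ω * g p4 ω) ∂P := by
        refine integral_congr_ae (Filter.Eventually.of_forall fun ω => ?_)
        beta_reduce
        rw [Finset.sum_mul_sum F F (fun p => c1 p * g p ω) (fun p => c2 p * g p ω),
          Finset.sum_mul_sum F F (fun p => c3 p * g p ω) (fun p => c4 p * g p ω),
          ← sum4_factor F (fun p1 p2 => c1 p1 * g p1 ω * (c2 p2 * g p2 ω))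
            (fun p3 p4 => c3 p3 * g p3 ω * (c4 p4 * g p4 ω))]
        refine Finset.sum_congr rfl fun p1 _ => Finset.sum_congr rfl fun p2 _ =>
          Finset.sum_congr rfl fun p3 _ => Finset.sum_congr rfl fun p4 _ => by ring
    _ = ∑ p1 ∈ F, ∑ p2 ∈ F, ∑ p3 ∈ F, ∑ p4 ∈ F, ∫ ω,
          c1 p1 * c2 p2 * c3 p3 * c4 p4 * (g p1 ω * g p2 ω * g p3 ω * g p4 ω) ∂P := by
        rw [integral_finset_sum F (fun p1 _ => integrable_finset_sum F (fun p2 _ =>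
          integrable_finset_sum F (fun p3 _ => integrable_finset_sum F (fun p4 _ =>
            hint p1 p2 p3 p4))))]
        refine Finset.sum_congr rfl fun p1 _ => ?_
        rw [integral_finset_sum F (fun p2 _ => integrable_finset_sum F (fun p3 _ =>
          integrable_finset_sum F (fun p4 _ => hint p1 p2 p3 p4)))]
        refine Finset.sum_congr rfl fun p2 _ => ?_
        rw [integral_finset_sum F (fun p3 _ => integrable_finset_sum F (fun p4 _ =>
          hint p1 p2 p3 p4))]
        refine Finset.sum_congr rfl fun p3 _ => ?_
        exact integral_finset_sum F (fun p4 _ => hint p1 p2 p3 p4)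
    _ = ∑ p1 ∈ F, ∑ p2 ∈ F, ∑ p3 ∈ F, ∑ p4 ∈ F,
          (c1 p1 * c2 p2 * D p1 p2 * (c3 p3 * c4 p4 * D p3 p4)
            + c1 p1 * c3 p3 * D p1 p3 * (c2 p2 * c4 p4 * D p2 p4)
            + c1 p1 * c4 p4 * D p1 p4 * (c2 p2 * c3 p3 * D p2 p3)) := by
        refine Finset.sum_congr rfl fun p1 _ => Finset.sum_congr rfl fun p2 _ =>
          Finset.sum_congr rfl fun p3 _ => Finset.sum_congr rfl fun p4 _ => ?_
        rw [integral_const_mul, m4 P g hmeas hindep hgauss p1 p2 p3 p4]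
        ring
    _ = (∑ p ∈ F, c1 p * c2 p) * (∑ p ∈ F, c3 p * c4 p)
        + (∑ p ∈ F, c1 p * c3 p) * (∑ p ∈ F, c2 p * c4 p)
        + (∑ p ∈ F, c1 p * c4 p) * (∑ p ∈ F, c2 p * c3 p) := by
        simp only [Finset.sum_add_distrib]
        rw [sum4_factor F (fun p q => c1 p * c2 q * D p q) (fun p q => c3 p * c4 q * D p q),
          sum4_factor' F (fun p q => c1 p * c3 q * D p q) (fun p q => c2 p * c4 q * D p q),
          sum4_factor'' F (fun p q => c1 p * c4 q * D p q) (fun p q => c2 p * c3 q * D p q),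
          sum_delta_pair F c1 c2, sum_delta_pair F c3 c4, sum_delta_pair F c1 c3,
          sum_delta_pair F c2 c4, sum_delta_pair F c1 c4, sum_delta_pair F c2 c3]

end Wick

lemma rep {N : ℕ} (μ : ℝ) (A : Matrix (Fin N) (Fin N) ℝ)
    {Ω : Type*} (x y : ℕ → Ω → Fin N → ℝ)
    (hy0 : ∀ ω, y 0 ω = μ • x 0 ω)
    (hyrec : ∀ t ω, y (t + 1) ω = A.mulVec (y t ω) + μ • x (t + 1) ω) :
    ∀ u k ω, y u ω k
      = ∑ s ∈ Finset.range (u+1), ∑ l, (μ * (A ^ (u - s)) k l) * x s ω l := by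
  intro u
  induction u with
  | zero =>
    intro k ω
    rw [hy0]
    simp [Matrix.one_apply, ite_mul, mul_ite, Finset.sum_range_one]
  | succ u ih =>
    intro k ω
    have hmain : ∑ l, A k l * (∑ s ∈ Finset.range (u+1), ∑ m, (μ * (A ^ (u - s)) l m) * x s ω m)
        = ∑ s ∈ Finset.range (u+1), ∑ m, (μ * (A ^ (u + 1 - s)) k m) * x s ω m := by
      calc ∑ l, A k l * (∑ s ∈ Finset.range (u+1), ∑ m, (μ * (A ^ (u - s)) l m) * x s ω m)
          = ∑ l, ∑ s ∈ Finset.range (u+1), A k l * (∑ m, (μ * (A ^ (u - s)) l m) * x s ω m) :=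
            Finset.sum_congr rfl fun l _ => Finset.mul_sum _ _ _
        _ = ∑ s ∈ Finset.range (u+1), ∑ l, A k l * (∑ m, (μ * (A ^ (u - s)) l m) * x s ω m) :=
            Finset.sum_comm
        _ = ∑ s ∈ Finset.range (u+1), ∑ m, (μ * (A ^ (u + 1 - s)) k m) * x s ω m := by
            refine Finset.sum_congr rfl fun s hs => ?_
            have hs' : s ≤ u := Nat.lt_succ_iff.mp (Finset.mem_range.mp hs)
            have hpow : A ^ (u + 1 - s) = A * A ^ (u - s) := by
              rw [show u + 1 - s = (u - s) + 1 by omega, pow_succ']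
            calc ∑ l, A k l * (∑ m, (μ * (A ^ (u - s)) l m) * x s ω m)
                = ∑ l, ∑ m, A k l * ((μ * (A ^ (u - s)) l m) * x s ω m) :=
                  Finset.sum_congr rfl fun l _ => Finset.mul_sum _ _ _
              _ = ∑ m, ∑ l, A k l * ((μ * (A ^ (u - s)) l m) * x s ω m) := Finset.sum_comm
              _ = ∑ m, (μ * (A ^ (u + 1 - s)) k m) * x s ω m := by
                  refine Finset.sum_congr rfl fun m _ => ?_
                  rw [hpow, Matrix.mul_apply, Finset.mul_sum, Finset.sum_mul]
                  exact Finset.sum_congr rfl fun l _ => by ring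
    rw [hyrec u ω]
    simp only [Pi.add_apply, Pi.smul_apply, smul_eq_mul, Matrix.mulVec, dotProduct]
    simp only [ih]
    rw [hmain, Finset.sum_range_succ (n := u + 1)]
    congr 1
    simp [Matrix.one_apply, ite_mul, mul_ite]

end CovWick


open CovWick

/-- For all times `j > t ≥ 0` and all indices `a, b, c, d`:
`Cov((y_j y_jᵀ)_{ab}, (y_t y_tᵀ)_{cd})
  = ∑_{p,q} (A^{j−t})_{ap} (A^{j−t})_{bq} (R₀(t)_{pc} R₀(t)_{qd} + R₀(t)_{pd} R₀(t)_{qc})`,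
where `R₀(t) = E[yₜ yₜᵀ]`. -/
theorem covariance_state_outer_products
    {Ω : Type*} [MeasurableSpace Ω] (P : Measure Ω) [IsProbabilityMeasure P]
    (N : ℕ) (hN : 1 ≤ N) (μ : ℝ) (hμ : μ ∈ Set.Ioo (0 : ℝ) 1)
    (A : Matrix (Fin N) (Fin N) ℝ) (hA : A.IsSymm)
    (x : ℕ → Ω → Fin N → ℝ)
    (hxmeas : ∀ t k, Measurable (fun ω => x t ω k))
    (hxindep : iIndepFun
      (fun (p : ℕ × Fin N) ω => x p.1 ω p.2) P)
    (hxgauss : ∀ t k, P.map (fun ω => x t ω k) = gaussianReal 0 1)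
    (y : ℕ → Ω → Fin N → ℝ)
    (hy0 : ∀ ω, y 0 ω = μ • x 0 ω)
    (hyrec : ∀ t ω, y (t + 1) ω = A.mulVec (y t ω) + μ • x (t + 1) ω)
    (t j : ℕ) (hjt : t < j) (a b c d : Fin N) :
    (∫ ω, (y j ω a * y j ω b) * (y t ω c * y t ω d) ∂P)
        - (∫ ω, y j ω a * y j ω b ∂P) * (∫ ω, y t ω c * y t ω d ∂P)
      = ∑ p : Fin N, ∑ q : Fin N,
          (A ^ (j - t)) a p * (A ^ (j - t)) b q *
            ((∫ ω, y t ω p * y t ω c ∂P) * (∫ ω, y t ω q * y t ω d ∂P)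
              + (∫ ω, y t ω p * y t ω d ∂P) * (∫ ω, y t ω q * y t ω c ∂P)) := by
  classical
  have hgm : ∀ p : ℕ × Fin N, Measurable ((fun p (ω : Ω) => x p.1 ω p.2) p) :=
    fun p => hxmeas p.1 p.2
  have hgg : ∀ p : ℕ × Fin N, P.map ((fun p (ω : Ω) => x p.1 ω p.2) p) = gaussianReal 0 1 :=
    fun p => hxgauss p.1 p.2
  set F : Finset (ℕ × Fin N) := Finset.range (j+1) ×ˢ (Finset.univ : Finset (Fin N)) with hF
  set co : ℕ → Fin N → ℕ × Fin N → ℝ :=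
    fun u k p => if p.1 ≤ u then μ * (A ^ (u - p.1)) k p.2 else 0 with hco
  have hrep : ∀ u, u ≤ j → ∀ (k : Fin N) ω,
      y u ω k = ∑ p ∈ F, co u k p * x p.1 ω p.2 := by
    intro u hu k ω
    rw [rep μ A x y hy0 hyrec u k ω, hF, Finset.sum_product]
    rw [← Finset.sum_subset (Finset.range_subset_range.mpr (by omega : u + 1 ≤ j + 1))
      (fun s _ hs => ?_)]
    · refine Finset.sum_congr rfl fun s hs => Finset.sum_congr rfl fun l _ => ?_
      have hsu : s ≤ u := Nat.lt_succ_iff.mp (Finset.mem_range.mp hs)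
      simp only [hco, if_pos hsu]
    · have hsu : ¬ s ≤ u := by
        simp only [Finset.mem_range] at hs
        omega
      simp only [hco, if_neg hsu, zero_mul, Finset.sum_const_zero]
  have hYj := hrep j le_rfl
  have hYt := hrep t (le_of_lt hjt)
  have key : ∀ (k e : Fin N), (∑ p ∈ F, co j k p * co t e p)
      = ∑ q : Fin N, (A ^ (j - t)) k q * (∑ p ∈ F, co t q p * co t e p) := by
    intro k e
    calc ∑ p ∈ F, co j k p * co t e p
        = ∑ p ∈ F, ∑ q : Fin N, (A ^ (j - t)) k q * (co t q p * co t e p) := by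
          refine Finset.sum_congr rfl fun p hp => ?_
          by_cases hpt : p.1 ≤ t
          · have hpj : p.1 ≤ j := le_trans hpt (le_of_lt hjt)
            simp only [hco, if_pos hpt, if_pos hpj]
            have hsplit : A ^ (j - p.1) = A ^ (j - t) * A ^ (t - p.1) := by
              rw [← pow_add]
              congr 1
              omega
            rw [hsplit, Matrix.mul_apply, Finset.mul_sum, Finset.sum_mul]
            exact Finset.sum_congr rfl fun q _ => by ring
          · simp [hco, if_neg hpt]
      _ = ∑ q : Fin N, ∑ p ∈ F, (A ^ (j - t)) k q * (co t q p * co t e p) := Finset.sum_comm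
      _ = ∑ q : Fin N, (A ^ (j - t)) k q * (∑ p ∈ F, co t q p * co t e p) :=
          Finset.sum_congr rfl fun q _ => (Finset.mul_sum _ _ _).symm
  simp only [hYj, hYt]
  rw [exp4 P (fun p ω => x p.1 ω p.2) hgm hxindep hgg F (co j a) (co j b) (co t c) (co t d),
    exp2 P (fun p ω => x p.1 ω p.2) hgm hxindep hgg F (co j a) (co j b)]
  simp only [exp2 P (fun p ω => x p.1 ω p.2) hgm hxindep hgg F]
  rw [show ∀ xx yy zz : ℝ, xx + yy + zz - xx = yy + zz from fun _ _ _ => by ring]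
  rw [key a c, key b d, key a d, key b c, Finset.sum_mul_sum, Finset.sum_mul_sum,
    ← Finset.sum_add_distrib]
  refine Finset.sum_congr rfl fun p _ => ?_
  rw [← Finset.sum_add_distrib]
  exact Finset.sum_congr rfl fun q _ => by ring
end
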